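/- arXiv:2107.09292 — 8 statements merged into one kernel-verified Lean document; each statement's English description precedes it below -/
import Mathlib

section
/- Let L : [0,∞) → ℝ^{N×N} be piecewise constant with respect to a switching sequence 0 = t_0 < t_1 < t_2 < ⋯, t_k → ∞, dwell times t_{k+1} − t_k ≥ α > 0, taking values in a finite set {L_1, …, L_M} of symmetric positive semidefinite matrices. If x : [0,∞) → ℝ^N solves ẋ(t) = −L(t)x(t) and lim_{t→∞} x(t) = x* exists, then lim_{t→∞} L(t)x* = 0. -/
open Matrix Filter

lemma exp_fixed_psd {N : ℕ} {A : Matrix (Fin N) (Fin N) ℝ} (hA : A.PosSemidef)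
    {α : ℝ} (hα : 0 < α) {v : Fin N → ℝ}
    (hv : NormedSpace.exp ((-α) • A) *ᵥ v = v) : A *ᵥ v = 0 := by
  have hH := hA.1
  set U : Matrix (Fin N) (Fin N) ℝ := (hH.eigenvectorUnitary : Matrix (Fin N) (Fin N) ℝ) with hU
  have h1 : U * star U = 1 := (Matrix.mem_unitaryGroup_iff).mp hH.eigenvectorUnitary.2
  have h2 : star U * U = 1 := (Matrix.mem_unitaryGroup_iff').mp hH.eigenvectorUnitary.2
  have hUunit : IsUnit U := ⟨⟨U, star U, h1, h2⟩, rfl⟩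
  have hUinv : U⁻¹ = star U := Matrix.inv_eq_left_inv h2
  have hspec : A = U * diagonal hH.eigenvalues * star U := by
    simpa using hH.spectral_theorem
  have hsmul : (-α) • A = U * diagonal (fun i => -(α * hH.eigenvalues i)) * U⁻¹ := by
    rw [hUinv]
    calc (-α) • A = (-α) • (U * diagonal hH.eigenvalues * star U) :=
          congrArg (fun M => (-α) • M) hspec
      _ = U * diagonal (fun i => -(α * hH.eigenvalues i)) * star U := by
          rw [← smul_mul_assoc, ← mul_smul_comm]
          congr 2
          ext i j
          by_cases h : i = j <;> simp [h, Matrix.diagonal_apply]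
  have hexp : NormedSpace.exp ((-α) • A)
      = U * diagonal (fun i => Real.exp (-(α * hH.eigenvalues i))) * star U := by
    rw [hsmul, Matrix.exp_conj _ _ hUunit, Matrix.exp_diagonal, hUinv]
    congr 2
    funext i
    rw [Pi.exp_def]
    simp [Real.exp_eq_exp_ℝ]
  set w : Fin N → ℝ := star U *ᵥ v with hw
  have hfix : diagonal (fun i => Real.exp (-(α * hH.eigenvalues i))) *ᵥ w = w := by
    have hv' : (U * diagonal (fun i => Real.exp (-(α * hH.eigenvalues i))) * star U) *ᵥ v = v := by
      rw [← hexp]; exact hv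
    have h3 := congrArg (fun z => star U *ᵥ z) hv'
    simpa [hw, mulVec_mulVec, ← Matrix.mul_assoc, h2, Matrix.one_mul] using h3
  have hwz : ∀ i, hH.eigenvalues i * w i = 0 := by
    intro i
    have hcomp := congrFun hfix i
    rw [mulVec_diagonal] at hcomp
    rcases eq_or_lt_of_le (hA.eigenvalues_nonneg i) with h0 | hpos
    · rw [← h0, zero_mul]
    · have hlt : Real.exp (-(α * hH.eigenvalues i)) < 1 := by
        rw [Real.exp_lt_one_iff]
        nlinarith
      have hz : (Real.exp (-(α * hH.eigenvalues i)) - 1) * w i = 0 := by linarith [hcomp]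
      rcases mul_eq_zero.mp hz with h | h
      · linarith
      · rw [h, mul_zero]
  calc A *ᵥ v = (U * diagonal hH.eigenvalues * star U) *ᵥ v :=
        congrArg (fun M => M *ᵥ v) hspec
    _ = U *ᵥ (diagonal hH.eigenvalues *ᵥ w) := by
        simp [hw, mulVec_mulVec, Matrix.mul_assoc]
    _ = U *ᵥ (fun i => hH.eigenvalues i * w i) := by
        rw [show diagonal hH.eigenvalues *ᵥ w = fun i => hH.eigenvalues i * w i from
          funext fun i => mulVec_diagonal _ _ _]
    _ = U *ᵥ (0 : Fin N → ℝ) := by rw [show (fun i => hH.eigenvalues i * w i) = (0 : Fin N → ℝ) from funext hwz]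
    _ = 0 := mulVec_zero U

/-- For a switched linear system `ẋ = -L(t) x` whose piecewise-constant
generator takes values in a finite set of symmetric positive semidefinite matrices
`Ls 0, …, Ls (M-1)` (with dwell times at least `α > 0` and switching times tending to `∞`),
if the solution `x` converges to `x*`, then `L(t) x* → 0` as `t → ∞`. -/
theorem cluster_consensus_limit_Laplacian
    (N M : ℕ) (α : ℝ) (hα : 0 < α)
    (t : ℕ → ℝ) (ht0 : t 0 = 0) (htmono : StrictMono t)
    (htlim : Tendsto t atTop atTop)
    (hdwell : ∀ k : ℕ, α ≤ t (k + 1) - t k)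
    (Ls : Fin M → Matrix (Fin N) (Fin N) ℝ)
    (hLs : ∀ i, (Ls i).PosSemidef)
    (σ : ℕ → Fin M)
    (L : ℝ → Matrix (Fin N) (Fin N) ℝ)
    (hL : ∀ k : ℕ, ∀ s ∈ Set.Ico (t k) (t (k + 1)), L s = Ls (σ k))
    (x : ℝ → (Fin N → ℝ))
    (hxcont : Continuous x)
    (hx : ∀ k : ℕ, ∀ s ∈ Set.Icc (t k) (t (k + 1)),
      x s = NormedSpace.exp (-(s - t k) • Ls (σ k)) *ᵥ x (t k))
    (xstar : Fin N → ℝ)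
    (hconv : Tendsto x atTop (nhds xstar)) :
    Tendsto (fun s => L s *ᵥ xstar) atTop (nhds 0) := by
  -- limits along switching times
  have hxk : Tendsto (fun k => x (t k)) atTop (nhds xstar) := hconv.comp htlim
  have hxka : Tendsto (fun k => x (t k + α)) atTop (nhds xstar) :=
    hconv.comp (tendsto_atTop_add_const_right _ α htlim)
  have hstep : ∀ k : ℕ, x (t k + α) = NormedSpace.exp ((-α) • Ls (σ k)) *ᵥ x (t k) := by
    intro k
    have hd := hdwell k
    have := hx k (t k + α) ⟨by linarith, by linarith⟩
    simpa [show t k + α - t k = α by ring] using this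
  -- indices occurring infinitely often satisfy Ls i *ᵥ xstar = 0
  have key2 : ∀ i : Fin M, (∃ᶠ k in atTop, σ k = i) → Ls i *ᵥ xstar = 0 := by
    intro i hi
    obtain ⟨φ, hφmono, hφ⟩ := extraction_of_frequently_atTop hi
    have hφt : Tendsto φ atTop atTop := hφmono.tendsto_atTop
    have l1 : Tendsto (fun n => x (t (φ n))) atTop (nhds xstar) := hxk.comp hφt
    have l2 : Tendsto (fun n => x (t (φ n) + α)) atTop (nhds xstar) := hxka.comp hφt
    have hmulcont : Continuous fun v : Fin N → ℝ => NormedSpace.exp ((-α) • Ls i) *ᵥ v :=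
      Continuous.matrix_mulVec continuous_const continuous_id
    have l3 : Tendsto (fun n => NormedSpace.exp ((-α) • Ls i) *ᵥ x (t (φ n))) atTop
        (nhds (NormedSpace.exp ((-α) • Ls i) *ᵥ xstar)) :=
      (hmulcont.tendsto xstar).comp l1
    have l2' : Tendsto (fun n => NormedSpace.exp ((-α) • Ls i) *ᵥ x (t (φ n))) atTop
        (nhds xstar) := by
      apply l2.congr
      intro n
      rw [hstep (φ n), hφ n]
    have hfix : NormedSpace.exp ((-α) • Ls i) *ᵥ xstar = xstar :=
      tendsto_nhds_unique l3 l2'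
    exact exp_fixed_psd (hLs i) hα hfix
  -- eventually, σ k is a frequently occurring index
  have hev : ∀ᶠ k in atTop, Ls (σ k) *ᵥ xstar = 0 := by
    have hall : ∀ᶠ k in atTop, ∀ i : Fin M, ¬(∃ᶠ m in atTop, σ m = i) → σ k ≠ i := by
      rw [eventually_all]
      intro i
      by_cases hi : ∃ᶠ m in atTop, σ m = i
      · exact Eventually.of_forall fun k h => absurd hi h
      · filter_upwards [not_frequently.mp hi] with k hk _
        exact hk
    filter_upwards [hall] with k hk
    apply key2
    by_contra h
    exact hk (σ k) h rfl
  obtain ⟨K, hK⟩ := eventually_atTop.mp hev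
  -- conclude: eventually L s *ᵥ xstar = 0
  have hev2 : ∀ᶠ s in atTop, L s *ᵥ xstar = 0 := by
    rw [eventually_atTop]
    refine ⟨t K, fun s hs => ?_⟩
    have hex : ∃ n, s < t n := ((htlim.eventually_gt_atTop s)).exists
    set n0 := Nat.find hex with hn0
    have hn0P : s < t n0 := Nat.find_spec hex
    have hn0ne : n0 ≠ 0 := by
      intro h
      rw [h, ht0] at hn0P
      have : (0:ℝ) ≤ t K := by rw [← ht0]; exact htmono.monotone (Nat.zero_le K)
      linarith
    obtain ⟨m, hm⟩ : ∃ m, n0 = m + 1 := ⟨n0 - 1, (Nat.succ_pred_eq_of_pos (Nat.pos_of_ne_zero hn0ne)).symm⟩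
    have hms : t m ≤ s := by
      by_contra h
      exact Nat.find_min hex (by omega : m < n0) (lt_of_not_ge h)
    have hsm1 : s < t (m + 1) := by rw [← hm]; exact hn0P
    have hmK : K ≤ m := by
      by_contra h
      have : m + 1 ≤ K := by omega
      have := htmono.monotone this
      linarith
    rw [hL m s ⟨hms, hsm1⟩]
    exact hK m hmK
  exact tendsto_const_nhds.congr' (by filter_upwards [hev2] with s h; rw [h])
end

section
/- Let L : [0,∞) → ℝ^{N×N} be piecewise constant with respect to a switching sequence 0 = t_0 < t_1 < ⋯, t_k → ∞, dwell times ≥ α > 0, taking values in a finite set {L_1, …, L_M} of symmetric positive semidefinite matrices, each of which occurs on infinitely many dwell intervals. Let Φ(t, t_0) be the state transition matrix of ẋ = −L(t)x. If Φ* := lim_{t→∞} Φ(t, t_0) exists, then Φ* is idempotent: (Φ*)^i = Φ* for every positive integer i. -/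
open Matrix Filter

lemma exp_psd_eq {N : ℕ} (L : Matrix (Fin N) (Fin N) ℝ) (hL : L.IsHermitian) (c : ℝ) :
    NormedSpace.exp (c • L) =
      (hL.eigenvectorUnitary : Matrix (Fin N) (Fin N) ℝ) *
        Matrix.diagonal (fun m => Real.exp (c * hL.eigenvalues m)) *
        star (hL.eigenvectorUnitary : Matrix (Fin N) (Fin N) ℝ) := by
  set U : Matrix (Fin N) (Fin N) ℝ := (hL.eigenvectorUnitary : Matrix (Fin N) (Fin N) ℝ) with hUdef
  have hU : U * star U = 1 := Matrix.mem_unitaryGroup_iff.mp hL.eigenvectorUnitary.2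
  have hUinv : U⁻¹ = star U := Matrix.inv_eq_right_inv hU
  have hUunit : IsUnit U := by
    rw [Matrix.isUnit_iff_isUnit_det]
    exact IsUnit.of_mul_eq_one _ (by rw [← Matrix.det_mul, hU, Matrix.det_one])
  have hspec : L = U * Matrix.diagonal hL.eigenvalues * star U := by
    have := hL.spectral_theorem
    simpa using this
  have hsm : c • L = U * Matrix.diagonal (fun m => c * hL.eigenvalues m) * U⁻¹ := by
    have hdi : (Matrix.diagonal fun m => c * hL.eigenvalues m)
        = c • Matrix.diagonal hL.eigenvalues := by
      rw [← Matrix.diagonal_smul]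
      congr 1
    conv_lhs => rw [hspec]
    rw [hUinv, hdi]
    conv_rhs => rw [mul_smul_comm, smul_mul_assoc]
  rw [hsm, Matrix.exp_conj U _ hUunit, Matrix.exp_diagonal, hUinv]
  congr 2
  rw [Pi.exp_def]
  ext m
  rw [← Real.exp_eq_exp_ℝ]

lemma spectral_gap {N : ℕ} {α : ℝ} (hα : 0 < α) (L : Matrix (Fin N) (Fin N) ℝ)
    (hL : L.PosSemidef) :
    ∃ D : (Fin N → ℝ) → ℝ, Continuous D ∧ (∀ v, 0 ≤ D v) ∧
      (∀ v, D v = 0 → L *ᵥ v = 0) ∧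
      ∀ τ : ℝ, α ≤ τ → ∀ v : Fin N → ℝ,
        D v ≤ v ⬝ᵥ v -
          (NormedSpace.exp (-τ • L) *ᵥ v) ⬝ᵥ (NormedSpace.exp (-τ • L) *ᵥ v) := by
  have hH : L.IsHermitian := hL.1
  set U : Matrix (Fin N) (Fin N) ℝ := (hH.eigenvectorUnitary : Matrix (Fin N) (Fin N) ℝ) with hUdef
  set d : Fin N → ℝ := hH.eigenvalues with hddef
  have hd : ∀ m, 0 ≤ d m := hL.eigenvalues_nonneg
  have hU : U * star U = 1 := Matrix.mem_unitaryGroup_iff.mp hH.eigenvectorUnitary.2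
  have hU2 : star U * U = 1 := mul_eq_one_comm.mp hU
  have hUt : star U = Uᵀ := by
    ext i j
    simp [Matrix.star_apply, Matrix.transpose_apply]
  have horth : ∀ y : Fin N → ℝ, (U *ᵥ y) ⬝ᵥ (U *ᵥ y) = y ⬝ᵥ y := by
    intro y
    rw [Matrix.dotProduct_mulVec, Matrix.vecMul_mulVec, ← hUt, hU2, Matrix.vecMul_one]
  have hspec : L = U * Matrix.diagonal d * star U := by
    have := hH.spectral_theorem
    simpa using this
  have hcoef : ∀ m, 0 ≤ 1 - Real.exp (-(2 * α) * d m) := by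
    intro m
    have h1 : -(2 * α) * d m ≤ 0 := mul_nonpos_of_nonpos_of_nonneg (by linarith) (hd m)
    have := Real.exp_le_one_iff.mpr h1
    linarith
  refine ⟨fun v => ∑ m, (1 - Real.exp (-(2 * α) * d m)) * ((star U *ᵥ v) m) ^ 2,
    ?_, ?_, ?_, ?_⟩
  · apply continuous_finset_sum
    intro m _
    have h1 : Continuous fun v : Fin N → ℝ => (star U *ᵥ v) m := by
      simp only [Matrix.mulVec, dotProduct]
      exact continuous_finset_sum _ fun j _ => continuous_const.mul (continuous_apply j)
    exact continuous_const.mul (h1.pow 2)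
  · intro v
    exact Finset.sum_nonneg fun m _ => mul_nonneg (hcoef m) (sq_nonneg _)
  · intro v hv
    have hterm := (Finset.sum_eq_zero_iff_of_nonneg
      (fun m _ => mul_nonneg (hcoef m) (sq_nonneg _))).mp hv
    have hzero : ∀ m, d m * (star U *ᵥ v) m = 0 := by
      intro m
      rcases eq_or_lt_of_le (hd m) with h | h
      · rw [← h, zero_mul]
      · have hc : 0 < 1 - Real.exp (-(2 * α) * d m) := by
          have h1 : -(2 * α) * d m < 0 := mul_neg_of_neg_of_pos (by linarith) h
          have := Real.exp_lt_one_iff.mpr h1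
          linarith
        have h2 := hterm m (Finset.mem_univ m)
        have hsq : ((star U *ᵥ v) m) ^ 2 = 0 := by
          rcases mul_eq_zero.mp h2 with h3 | h3
          · exact absurd h3 (ne_of_gt hc)
          · exact h3
        rw [pow_eq_zero_iff (two_ne_zero)] at hsq
        rw [hsq, mul_zero]
    have hdiag : Matrix.diagonal d *ᵥ (star U *ᵥ v) = fun m => d m * (star U *ᵥ v) m := by
      ext m
      rw [Matrix.mulVec_diagonal]
    have hLv : L *ᵥ v = U *ᵥ fun m => d m * (star U *ᵥ v) m := by
      conv_lhs => rw [hspec]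
      rw [← Matrix.mulVec_mulVec, ← Matrix.mulVec_mulVec, hdiag]
    rw [hLv]
    have : (fun m => d m * (star U *ᵥ v) m) = 0 := funext hzero
    rw [this, Matrix.mulVec_zero]
  · intro τ hτ v
    rw [exp_psd_eq L hH (-τ)]
    set w : Fin N → ℝ := star U *ᵥ v with hw
    have hvw : (U * Matrix.diagonal (fun m => Real.exp (-τ * d m)) * star U) *ᵥ v
        = U *ᵥ fun m => Real.exp (-τ * d m) * w m := by
      have hdiag : (Matrix.diagonal fun m => Real.exp (-τ * d m)) *ᵥ (star U *ᵥ v)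
          = fun m => Real.exp (-τ * d m) * w m := by
        ext m
        rw [Matrix.mulVec_diagonal]
      rw [← Matrix.mulVec_mulVec, ← Matrix.mulVec_mulVec, hdiag]
    have hv : U *ᵥ w = v := by
      rw [hw, Matrix.mulVec_mulVec, hU, Matrix.one_mulVec]
    have hq1 : v ⬝ᵥ v = w ⬝ᵥ w := by rw [← hv, horth]
    rw [hvw, horth, hq1]
    simp only [dotProduct]
    rw [← Finset.sum_sub_distrib]
    apply Finset.sum_le_sum
    intro m _
    have h1 : Real.exp (-τ * d m) * Real.exp (-τ * d m) = Real.exp (-(2 * τ) * d m) := by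
      rw [← Real.exp_add]; ring_nf
    have h2 : Real.exp (-(2 * τ) * d m) ≤ Real.exp (-(2 * α) * d m) :=
      Real.exp_le_exp.mpr (by nlinarith [hd m])
    nlinarith [sq_nonneg (w m), Real.exp_pos (-(2 * α) * d m), sq_nonneg (w m * Real.exp (-τ * d m))]

lemma exp_fix' {N : ℕ} (A B : Matrix (Fin N) (Fin N) ℝ) (h : A * B = 0) :
    NormedSpace.exp A * B = B := by
  letI : SeminormedRing (Matrix (Fin N) (Fin N) ℝ) := Matrix.linftyOpSemiNormedRing
  letI : NormedRing (Matrix (Fin N) (Fin N) ℝ) := Matrix.linftyOpNormedRing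
  letI : NormedAlgebra ℝ (Matrix (Fin N) (Fin N) ℝ) := Matrix.linftyOpNormedAlgebra
  have hpow : ∀ n : ℕ, A ^ (n + 1) * B = 0 := by
    intro n
    induction n with
    | zero => simpa using h
    | succ m ih => rw [pow_succ, mul_assoc, h, mul_zero]
  rw [NormedSpace.exp_eq_tsum ℝ]; beta_reduce; erw [← (NormedSpace.expSeries_summable' (𝕂 := ℝ) A).tsum_mul_right B]
  rw [tsum_eq_single 0]
  · simp
  · intro n hn
    obtain ⟨m, rfl⟩ := Nat.exists_eq_succ_of_ne_zero hn
    rw [smul_mul_assoc, hpow, smul_zero]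

/-- For the switched linear system `ẋ = -L(t) x` whose piecewise-constant
generator takes values in a finite set `{Ls 0, …, Ls (M-1)}` of symmetric positive semidefinite
matrices, each occurring on infinitely many dwell intervals, if the state transition matrix
`Φ(t, t₀)` converges to `Φ*` as `t → ∞`, then `Φ*` is idempotent: `(Φ*)^i = Φ*` for every
positive integer `i`. -/
theorem transitionMatrix_limit_idempotent
    (N M : ℕ) (α : ℝ) (hα : 0 < α)
    (t : ℕ → ℝ) (ht0 : t 0 = 0) (htmono : StrictMono t)
    (htlim : Tendsto t atTop atTop)
    (hdwell : ∀ k : ℕ, α ≤ t (k + 1) - t k)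
    (Ls : Fin M → Matrix (Fin N) (Fin N) ℝ)
    (hLs : ∀ i, (Ls i).PosSemidef)
    (σ : ℕ → Fin M)
    (hinf : ∀ i : Fin M, ∀ n : ℕ, ∃ k : ℕ, n ≤ k ∧ σ k = i)
    (Φ : ℝ → Matrix (Fin N) (Fin N) ℝ)
    (hΦ0 : Φ 0 = 1)
    (hΦ : ∀ k : ℕ, ∀ s ∈ Set.Icc (t k) (t (k + 1)),
      Φ s = NormedSpace.exp (-(s - t k) • Ls (σ k)) * Φ (t k))
    (Φstar : Matrix (Fin N) (Fin N) ℝ)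
    (hΦstar : Tendsto Φ atTop (nhds Φstar)) :
    ∀ i : ℕ, 0 < i → Φstar ^ i = Φstar := by
  -- the one-step recursion
  have hkey : ∀ k : ℕ,
      Φ (t (k + 1)) = NormedSpace.exp (-(t (k + 1) - t k) • Ls (σ k)) * Φ (t k) := by
    intro k
    exact hΦ k (t (k + 1)) ⟨(htmono (Nat.lt_succ_self k)).le, le_refl _⟩
  have hΦt : Tendsto (fun k => Φ (t k)) atTop (nhds Φstar) := hΦstar.comp htlim
  -- each generator annihilates the limit
  have hker : ∀ i : Fin M, Ls i * Φstar = 0 := by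
    intro i
    obtain ⟨D, hDc, hD0, hDker, hDgap⟩ := spectral_gap hα (Ls i) (hLs i)
    have hcols : ∀ x : Fin N → ℝ, Ls i *ᵥ (Φstar *ᵥ x) = 0 := by
      intro x
      set v : ℕ → Fin N → ℝ := fun k => Φ (t k) *ᵥ x with hvdef
      have hmvc : Continuous fun A : Matrix (Fin N) (Fin N) ℝ => A *ᵥ x :=
        continuous_id.matrix_mulVec continuous_const
      have hvlim : Tendsto v atTop (nhds (Φstar *ᵥ x)) :=
        (hmvc.tendsto Φstar).comp hΦt
      have hqc : Continuous fun y : Fin N → ℝ => y ⬝ᵥ y := by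
        simp only [dotProduct]
        exact continuous_finset_sum _ fun j _ => (continuous_apply j).mul (continuous_apply j)
      have hq1 : Tendsto (fun k => v k ⬝ᵥ v k) atTop (nhds ((Φstar *ᵥ x) ⬝ᵥ (Φstar *ᵥ x))) :=
        (hqc.tendsto _).comp hvlim
      have hq2 : Tendsto (fun k => v (k + 1) ⬝ᵥ v (k + 1)) atTop
          (nhds ((Φstar *ᵥ x) ⬝ᵥ (Φstar *ᵥ x))) :=
        hq1.comp (tendsto_add_atTop_nat 1)
      have hq : Tendsto (fun k => v k ⬝ᵥ v k - v (k + 1) ⬝ᵥ v (k + 1)) atTop (nhds 0) := by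
        simpa using hq1.sub hq2
      have hgap : ∀ k : ℕ, σ k = i → D (v k) ≤ v k ⬝ᵥ v k - v (k + 1) ⬝ᵥ v (k + 1) := by
        intro k hk
        have hv1 : v (k + 1) = NormedSpace.exp (-(t (k + 1) - t k) • Ls i) *ᵥ v k := by
          simp only [hvdef]
          rw [hkey k, hk, ← Matrix.mulVec_mulVec]
        rw [hv1]
        exact hDgap _ (hdwell k) (v k)
      obtain ⟨φ, hφmono, hφ⟩ := Filter.extraction_of_frequently_atTop
        (frequently_atTop.mpr fun n => by
          obtain ⟨k, hk1, hk2⟩ := hinf i n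
          exact ⟨k, hk1, hk2⟩)
      have hDlim : Tendsto (fun n => D (v (φ n))) atTop (nhds (D (Φstar *ᵥ x))) :=
        (hDc.tendsto _).comp (hvlim.comp hφmono.tendsto_atTop)
      have hglim : Tendsto
          (fun n => v (φ n) ⬝ᵥ v (φ n) - v (φ n + 1) ⬝ᵥ v (φ n + 1)) atTop (nhds 0) :=
        hq.comp hφmono.tendsto_atTop
      have hle : D (Φstar *ᵥ x) ≤ 0 :=
        le_of_tendsto_of_tendsto' hDlim hglim fun n => hgap _ (hφ n)
      exact hDker _ (le_antisymm hle (hD0 _))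
    ext j l
    have h1 := congrFun (hcols (Pi.single l 1)) j
    rw [Matrix.mulVec_mulVec] at h1
    simpa [Matrix.mulVec_single] using h1
  -- exponentials fix the limit
  have hfix : ∀ (c : ℝ) (i : Fin M), NormedSpace.exp (c • Ls i) * Φstar = Φstar := by
    intro c i
    exact exp_fix' _ _ (by rw [Matrix.smul_mul, hker i, smul_zero])
  have hfix2 : ∀ k : ℕ, Φ (t k) * Φstar = Φstar := by
    intro k
    induction k with
    | zero => rw [ht0, hΦ0, one_mul]
    | succ m ih => rw [hkey m, mul_assoc, ih, hfix]
  -- pass to the limit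
  have hidem : Φstar * Φstar = Φstar := by
    have h1 : Tendsto (fun k => Φ (t k) * Φstar) atTop (nhds (Φstar * Φstar)) :=
      ((continuous_id.matrix_mul continuous_const).tendsto _).comp hΦt
    have h2 : Tendsto (fun k => Φ (t k) * Φstar) atTop (nhds Φstar) := by
      simp only [hfix2]
      exact tendsto_const_nhds
    exact tendsto_nhds_unique h1 h2
  intro i hi
  induction i with
  | zero => exact absurd hi (lt_irrefl 0)
  | succ n ih =>
    rcases Nat.eq_zero_or_pos n with h | h
    · rw [h, pow_one]
    · rw [pow_succ, ih h, hidem]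
end

section
/- Let L : [0,∞) → ℝ^{N×N} be piecewise constant with respect to a switching sequence 0 = t_0 < t_1 < ⋯, t_k → ∞, dwell times ≥ α > 0, taking values in a finite set {L_1, …, L_M} of symmetric positive semidefinite matrices, each occurring on infinitely many dwell intervals. If x solves ẋ(t) = −L(t)x(t) and lim_{t→∞} x(t) = x*, then x* lies in the intersection of the null spaces of L_1, …, L_M: L_i x* = 0 for every i = 1, …, M. -/
open Matrix Filter

/-- If `u` is an eigenvector of `A` with eigenvalue `μ`, then it is an eigenvector of
`exp A` with eigenvalue `exp μ`. -/
lemma exp_mulVec_eigen {N : ℕ} (A : Matrix (Fin N) (Fin N) ℝ) (u : Fin N → ℝ) (μ : ℝ)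
    (h : A *ᵥ u = μ • u) :
    NormedSpace.exp A *ᵥ u = Real.exp μ • u := by
  letI : SeminormedRing (Matrix (Fin N) (Fin N) ℝ) := Matrix.linftyOpSemiNormedRing
  letI : NormedRing (Matrix (Fin N) (Fin N) ℝ) := Matrix.linftyOpNormedRing
  letI : NormedAlgebra ℝ (Matrix (Fin N) (Fin N) ℝ) := Matrix.linftyOpNormedAlgebra
  have hpow : ∀ n : ℕ, A ^ n *ᵥ u = μ ^ n • u := by
    intro n
    induction n with
    | zero => simp [Matrix.one_mulVec]
    | succ n ih =>
      rw [pow_succ, ← Matrix.mulVec_mulVec, h, Matrix.mulVec_smul, ih, smul_smul, pow_succ]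
      ring_nf
  let f : Matrix (Fin N) (Fin N) ℝ →ₗ[ℝ] (Fin N → ℝ) :=
    { toFun := fun B => B *ᵥ u
      map_add' := fun B C => Matrix.add_mulVec B C u
      map_smul' := fun r B => Matrix.smul_mulVec r B u }
  let F : Matrix (Fin N) (Fin N) ℝ →L[ℝ] (Fin N → ℝ) := f.toContinuousLinearMap
  have hs : Summable fun n : ℕ => ((Nat.factorial n : ℝ))⁻¹ • A ^ n := NormedSpace.expSeries_summable' A
  have h1 : NormedSpace.exp A *ᵥ u = F (∑' n : ℕ, ((Nat.factorial n : ℝ))⁻¹ • A ^ n) := by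
    rw [NormedSpace.exp_eq_tsum ℝ]
    rfl
  rw [h1, F.map_tsum hs]
  have h2 : ∀ n : ℕ, F (((Nat.factorial n : ℝ))⁻¹ • A ^ n) = (((Nat.factorial n : ℝ))⁻¹ * μ ^ n) • u := by
    intro n
    calc F (((Nat.factorial n : ℝ))⁻¹ • A ^ n)
        = ((Nat.factorial n : ℝ))⁻¹ • F (A ^ n) := _root_.map_smul F _ _
      _ = ((Nat.factorial n : ℝ))⁻¹ • (μ ^ n • u) := by
          rw [show F (A ^ n) = A ^ n *ᵥ u from rfl, hpow n]
      _ = (((Nat.factorial n : ℝ))⁻¹ * μ ^ n) • u := by rw [smul_smul]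
  rw [tsum_congr h2]
  have hs2 : Summable fun n : ℕ => ((Nat.factorial n : ℝ))⁻¹ * μ ^ n := by
    simpa using NormedSpace.expSeries_summable' (𝕂 := ℝ) μ
  rw [hs2.tsum_smul_const, Real.exp_eq_exp_ℝ, NormedSpace.exp_eq_tsum ℝ]
  simp [smul_eq_mul]

/-- If `exp (-α • L) *ᵥ w = w` for a symmetric positive semidefinite `L` and `α > 0`,
then `L *ᵥ w = 0`. -/
lemma mulVec_finsum {N : ℕ} (A : Matrix (Fin N) (Fin N) ℝ) (f : Fin N → (Fin N → ℝ)) :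
    A *ᵥ (∑ j, f j) = ∑ j, A *ᵥ f j := by
  exact map_sum A.mulVecLin f Finset.univ

lemma fixed_point_of_exp_psd {N : ℕ} {L : Matrix (Fin N) (Fin N) ℝ} (hL : L.PosSemidef)
    {α : ℝ} (hα : 0 < α) {w : Fin N → ℝ}
    (hw : NormedSpace.exp (-α • L) *ᵥ w = w) : L *ᵥ w = 0 := by
  have hH : L.IsHermitian := hL.1
  set b := hH.eigenvectorBasis with hb
  set lam := hH.eigenvalues with hlam
  have hexp : ∀ j, NormedSpace.exp (-α • L) *ᵥ ⇑(b j) =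
      Real.exp (-α * lam j) • ⇑(b j) := by
    intro j
    apply exp_mulVec_eigen
    rw [Matrix.smul_mulVec, hH.mulVec_eigenvectorBasis, smul_smul]
  set r : Fin N → ℝ := fun j => b.toBasis.repr (WithLp.toLp 2 w) j with hr
  have hrep : ∑ j, r j • (⇑(b j) : Fin N → ℝ) = w := by
    have := congrArg WithLp.ofLp (b.toBasis.sum_repr (WithLp.toLp 2 w))
    simpa [hr, OrthonormalBasis.coe_toBasis] using this
  -- fixed point equation in coordinates
  have hco : ∀ j, r j * (Real.exp (-α * lam j) - 1) = 0 := by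
    have hsum0 : ∑ j, (r j * (Real.exp (-α * lam j) - 1)) • (b j : EuclideanSpace ℝ (Fin N))
        = 0 := by
      have h1 : NormedSpace.exp (-α • L) *ᵥ w = ∑ j, (r j * Real.exp (-α * lam j)) • ⇑(b j) := by
        rw [← hrep, mulVec_finsum]
        refine Finset.sum_congr rfl fun j _ => ?_
        rw [Matrix.mulVec_smul, hexp j, smul_smul, mul_comm]
      have h2 : ∑ j, (r j * Real.exp (-α * lam j)) • (⇑(b j) : Fin N → ℝ)
          = ∑ j, r j • ⇑(b j) := by rw [← h1, hw, hrep]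
      have h3 : (∑ j, (r j * (Real.exp (-α * lam j) - 1)) • (⇑(b j) : Fin N → ℝ)) = 0 := by
        have : ∀ j, (r j * (Real.exp (-α * lam j) - 1)) • (⇑(b j) : Fin N → ℝ)
            = (r j * Real.exp (-α * lam j)) • ⇑(b j) - r j • ⇑(b j) := by
          intro j
          rw [mul_sub, mul_one, sub_smul]
        rw [Finset.sum_congr rfl fun j _ => this j, Finset.sum_sub_distrib, h2, sub_self]
      exact WithLp.ofLp_injective 2 (by simpa using h3)
    have hli := b.toBasis.linearIndependent
    have := Fintype.linearIndependent_iff.mp hli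
      (fun j => r j * (Real.exp (-α * lam j) - 1)) (by simpa using hsum0)
    exact this
  -- hence for each j, lam j * r j = 0
  have hzero : ∀ j, lam j * r j = 0 := by
    intro j
    rcases eq_or_ne (lam j) 0 with h0 | h0
    · rw [h0, zero_mul]
    · have hpos : 0 < lam j := lt_of_le_of_ne (hL.eigenvalues_nonneg j) (Ne.symm h0)
      have hlt : Real.exp (-α * lam j) < 1 := by
        rw [Real.exp_lt_one_iff]
        nlinarith
      have : r j = 0 := by
        rcases mul_eq_zero.mp (hco j) with h | h
        · exact h
        · exfalso; exact (sub_ne_zero.mpr (ne_of_lt hlt)) h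
      rw [this, mul_zero]
  -- conclude
  calc L *ᵥ w = ∑ j, (lam j * r j) • (⇑(b j) : Fin N → ℝ) := by
        rw [← hrep, mulVec_finsum]
        refine Finset.sum_congr rfl fun j _ => ?_
        rw [Matrix.mulVec_smul, hH.mulVec_eigenvectorBasis, smul_smul]
        ring_nf
        rfl
    _ = 0 := by
        rw [Finset.sum_congr rfl fun j _ => by rw [hzero j, zero_smul]]
        simp

/-- For the switched linear system `ẋ = -L(t) x` whose piecewise-constant
generator takes values in a finite set `{Ls 0, …, Ls (M-1)}` of symmetric positive semidefinite
matrices, each occurring on infinitely many dwell intervals, if the solution `x` converges to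
`x*`, then `x*` lies in the intersection of the null spaces of the `Ls i`:
`Ls i *ᵥ x* = 0` for every `i`. -/
theorem limit_in_common_nullspace
    (N M : ℕ) (α : ℝ) (hα : 0 < α)
    (t : ℕ → ℝ) (ht0 : t 0 = 0) (htmono : StrictMono t)
    (htlim : Tendsto t atTop atTop)
    (hdwell : ∀ k : ℕ, α ≤ t (k + 1) - t k)
    (Ls : Fin M → Matrix (Fin N) (Fin N) ℝ)
    (hLs : ∀ i, (Ls i).PosSemidef)
    (σ : ℕ → Fin M)
    (hinf : ∀ i : Fin M, ∀ n : ℕ, ∃ k : ℕ, n ≤ k ∧ σ k = i)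
    (x : ℝ → (Fin N → ℝ))
    (hx : ∀ k : ℕ, ∀ s ∈ Set.Icc (t k) (t (k + 1)),
      x s = NormedSpace.exp (-(s - t k) • Ls (σ k)) *ᵥ x (t k))
    (xstar : Fin N → ℝ)
    (hconv : Tendsto x atTop (nhds xstar)) :
    ∀ i : Fin M, Ls i *ᵥ xstar = 0 := by
  intro i
  -- choose a subsequence of intervals where the generator equals `Ls i`
  choose k hk hσ using hinf i
  have hkt : Tendsto (fun n => t (k n)) atTop atTop :=
    tendsto_atTop_mono (fun n => htmono.monotone (hk n)) htlim
  -- `x (t (k n)) → xstar`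
  have hA : Tendsto (fun n => x (t (k n))) atTop (nhds xstar) := hconv.comp hkt
  -- `x (t (k n) + α) → xstar`
  have hkt' : Tendsto (fun n => t (k n) + α) atTop atTop :=
    tendsto_atTop_add_const_right _ α hkt
  have hB : Tendsto (fun n => x (t (k n) + α)) atTop (nhds xstar) := hconv.comp hkt'
  -- the flow identity on each chosen interval
  have heq : ∀ n, x (t (k n) + α) = NormedSpace.exp (-α • Ls i) *ᵥ x (t (k n)) := by
    intro n
    have hmem : t (k n) + α ∈ Set.Icc (t (k n)) (t (k n + 1)) := by
      constructor
      · linarith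
      · have := hdwell (k n)
        linarith
    have := hx (k n) _ hmem
    rwa [add_sub_cancel_left, hσ n] at this
  -- pass to the limit
  have hC : Tendsto (fun n => NormedSpace.exp (-α • Ls i) *ᵥ x (t (k n))) atTop
      (nhds (NormedSpace.exp (-α • Ls i) *ᵥ xstar)) := by
    have hcont : Continuous fun w : Fin N → ℝ => NormedSpace.exp (-α • Ls i) *ᵥ w :=
      continuous_const.matrix_mulVec continuous_id
    exact (hcont.tendsto xstar).comp hA
  have hfix : NormedSpace.exp (-α • Ls i) *ᵥ xstar = xstar := by
    refine tendsto_nhds_unique ?_ hB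
    exact hC.congr fun n => (heq n).symm
  exact fixed_point_of_exp_psd (hLs i) hα hfix
end

section
/- Let L : [0,∞) → ℝ^{N×N} be piecewise constant with respect to a switching sequence 0 = t_0 < t_1 < ⋯, t_k → ∞, dwell times ≥ α > 0, taking values in a finite set {L_1, …, L_M} of symmetric positive semidefinite matrices, each occurring on infinitely many dwell intervals. Suppose that for every initial vector the solution of ẋ(t) = −L(t)x(t) converges as t → ∞. Let η_1, …, η_r be an orthonormal basis of ∩_{i=1}^M ker(L_i). Then for every initial condition x(t_0) = x_0, the solution satisfies lim_{t→∞} x(t) = Σ_{i=1}^r (η_i^⊤ x_0) η_i; that is, the limit is the orthogonal projection of x_0 onto ∩_{i=1}^M ker(L_i). -/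
open Matrix Filter NormedSpace
open scoped Nat

variable {N : ℕ}


noncomputable def mvApply (z : Fin N → ℝ) : Matrix (Fin N) (Fin N) ℝ →ₗ[ℝ] (Fin N → ℝ) where
  toFun B := B *ᵥ z
  map_add' B C := Matrix.add_mulVec B C z
  map_smul' c B := Matrix.smul_mulVec c B z

lemma exp_mulVec_of_kernel (A : Matrix (Fin N) (Fin N) ℝ) (z : Fin N → ℝ)
    (hz : A *ᵥ z = 0) : exp A *ᵥ z = z := by
  letI : SeminormedRing (Matrix (Fin N) (Fin N) ℝ) := Matrix.linftyOpSemiNormedRing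
  letI : NormedRing (Matrix (Fin N) (Fin N) ℝ) := Matrix.linftyOpNormedRing
  letI : NormedAlgebra ℝ (Matrix (Fin N) (Fin N) ℝ) := Matrix.linftyOpNormedAlgebra
  have hφ : Continuous (mvApply z) := (mvApply z).continuous_of_finiteDimensional
  let ψ : Matrix (Fin N) (Fin N) ℝ →L[ℝ] (Fin N → ℝ) := ⟨mvApply z, hφ⟩
  have hsum : Summable fun n : ℕ => (n !⁻¹ : ℝ) • A ^ n := expSeries_summable' A
  have hmap : exp A *ᵥ z = ∑' n : ℕ, ψ ((n !⁻¹ : ℝ) • A ^ n) := by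
    rw [exp_eq_tsum ℝ]
    exact (ψ.map_tsum hsum)
  rw [hmap, tsum_eq_single 0]
  · simp [ψ, mvApply]
  · intro n hn
    obtain ⟨m, rfl⟩ := Nat.exists_eq_succ_of_ne_zero hn
    have h1 : A ^ (m + 1) *ᵥ z = 0 := by
      rw [pow_succ, ← mulVec_mulVec, hz, mulVec_zero]
    simp [ψ, mvApply, Matrix.smul_mulVec, h1]

lemma exp_transpose_self {A : Matrix (Fin N) (Fin N) ℝ} (hA : Aᵀ = A) :
    (exp A)ᵀ = exp A := by
  rw [← Matrix.exp_transpose, hA]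

lemma exp_quad_nonneg {A : Matrix (Fin N) (Fin N) ℝ} (hA : Aᵀ = A) (v : Fin N → ℝ) :
    0 ≤ v ⬝ᵥ (exp A *ᵥ v) := by
  have hhalf : A = (2⁻¹ : ℝ) • A + (2⁻¹ : ℝ) • A := by
    rw [← add_smul]; norm_num
  have hexp : exp A = exp ((2⁻¹ : ℝ) • A) * exp ((2⁻¹ : ℝ) • A) := by
    conv_lhs => rw [hhalf]
    exact Matrix.exp_add_of_commute _ _ (Commute.refl _)
  set B := exp ((2⁻¹ : ℝ) • A) with hB
  have hBt : Bᵀ = B := exp_transpose_self (by rw [Matrix.transpose_smul, hA])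
  rw [hexp, ← mulVec_mulVec, Matrix.dotProduct_mulVec, ← hBt, Matrix.vecMul_transpose, hBt]
  exact Finset.sum_nonneg fun i _ => mul_self_nonneg _

lemma fixed_half {L : Matrix (Fin N) (Fin N) ℝ} (hL : Lᵀ = L) {y : Fin N → ℝ} {s : ℝ}
    (h : exp (-s • L) *ᵥ y = y) : exp (-(s/2) • L) *ᵥ y = y := by
  set B := exp (-(s/2) • L) with hBdef
  have hBt : Bᵀ = B := exp_transpose_self (by rw [Matrix.transpose_smul, hL])
  have hBB : B * B = exp (-s • L) := by
    rw [hBdef, ← Matrix.exp_add_of_commute _ _ (Commute.refl _), ← add_smul]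
    ring_nf
  have key : (B + 1) *ᵥ ((B - 1) *ᵥ y) = 0 := by
    rw [mulVec_mulVec]
    have : (B + 1) * (B - 1) = B * B - 1 := by noncomm_ring
    rw [this, hBB, Matrix.sub_mulVec, h, Matrix.one_mulVec, sub_self]
  by_contra hne
  have hw : (B - 1) *ᵥ y ≠ 0 := by
    intro h0
    apply hne
    have h0' : B *ᵥ y - y = 0 := by rwa [Matrix.sub_mulVec, Matrix.one_mulVec] at h0
    exact sub_eq_zero.mp h0'
  set w := (B - 1) *ᵥ y with hw'
  have h1 : w ⬝ᵥ ((B + 1) *ᵥ w) = 0 := by rw [key, dotProduct_zero]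
  have h2 : w ⬝ᵥ ((B + 1) *ᵥ w) = w ⬝ᵥ (B *ᵥ w) + w ⬝ᵥ w := by
    rw [Matrix.add_mulVec, Matrix.one_mulVec, dotProduct_add]
  have h3 : 0 ≤ w ⬝ᵥ (B *ᵥ w) := exp_quad_nonneg (by rw [Matrix.transpose_smul, hL]) w
  have h4 : 0 < w ⬝ᵥ w := by
    rcases (dotProduct_self_eq_zero (v := w)).not.mpr hw with h5
    have h6 : 0 ≤ w ⬝ᵥ w := Finset.sum_nonneg fun i _ => mul_self_nonneg _
    exact lt_of_le_of_ne h6 (Ne.symm h5)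
  linarith [h1, h2.symm.trans h1]

lemma kernel_of_fixed {L : Matrix (Fin N) (Fin N) ℝ} (hL : Lᵀ = L) {y : Fin N → ℝ} {α : ℝ}
    (hα : 0 < α) (h : exp (-α • L) *ᵥ y = y) : L *ᵥ y = 0 := by
  letI : SeminormedRing (Matrix (Fin N) (Fin N) ℝ) := Matrix.linftyOpSemiNormedRing
  letI : NormedRing (Matrix (Fin N) (Fin N) ℝ) := Matrix.linftyOpNormedRing
  letI : NormedAlgebra ℝ (Matrix (Fin N) (Fin N) ℝ) := Matrix.linftyOpNormedAlgebra
  -- iterated halving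
  have hseq : ∀ k : ℕ, exp (-(α / 2 ^ k) • L) *ᵥ y = y := by
    intro k
    induction k with
    | zero => simpa using h
    | succ k ih =>
      have := fixed_half hL ih
      have harg : α / 2 ^ k / 2 = α / 2 ^ (k + 1) := by ring
      rwa [harg] at this
  -- derivative of exp at 0
  have hφ : Continuous (mvApply y) := (mvApply y).continuous_of_finiteDimensional
  let ψ : Matrix (Fin N) (Fin N) ℝ →L[ℝ] (Fin N → ℝ) := ⟨mvApply y, hφ⟩
  have hder : HasDerivAt (fun u : ℝ => exp (u • (-L))) (-L) 0 := by
    have := hasDerivAt_exp_smul_const (𝕂 := ℝ) (-L) (0 : ℝ)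
    simp only [zero_smul, NormedSpace.exp_zero, one_mul] at this
    exact this
  have hF : HasDerivAt (fun u : ℝ => ψ (exp (u • (-L)))) (ψ (-L)) 0 :=
    ψ.hasFDerivAt.comp_hasDerivAt 0 hder
  have hslope := hasDerivAt_iff_tendsto_slope.mp hF
  -- the sequence α / 2^k tends to 0 within ≠ 0
  have hpos : ∀ k : ℕ, (0:ℝ) < α / 2 ^ k := fun k => by positivity
  have htend : Tendsto (fun k : ℕ => α / 2 ^ k) atTop (nhds 0) := by
    simpa [div_eq_mul_inv, ← inv_pow] using
      (tendsto_pow_atTop_nhds_zero_of_lt_one (by norm_num : (0:ℝ) ≤ 2⁻¹)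
        (by norm_num : (2⁻¹:ℝ) < 1)).const_mul α
  have htend' : Tendsto (fun k : ℕ => α / 2 ^ k) atTop (nhdsWithin 0 {(0:ℝ)}ᶜ) :=
    tendsto_nhdsWithin_of_tendsto_nhds_of_eventually_within _ htend
      (Eventually.of_forall fun k => (hpos k).ne')
  have hcomp : Tendsto (fun k : ℕ => slope (fun u : ℝ => ψ (exp (u • (-L)))) 0 (α / 2 ^ k))
      atTop (nhds (ψ (-L))) := hslope.comp htend'
  have hzero : ∀ k : ℕ, slope (fun u : ℝ => ψ (exp (u • (-L)))) 0 (α / 2 ^ k) = 0 := by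
    intro k
    have h1 : ψ (exp ((α / 2 ^ k) • (-L))) = y := by
      have : (α / 2 ^ k) • (-L) = -(α / 2 ^ k) • L := by
        rw [neg_smul, smul_neg]
      rw [this]
      exact hseq k
    have h2 : ψ (exp ((0:ℝ) • (-L))) = y := by
      simp [ψ, mvApply, NormedSpace.exp_zero]
    simp only [slope, vsub_eq_sub, sub_zero]
    rw [h1, h2, sub_self, smul_zero]
  have : (fun k : ℕ => slope (fun u : ℝ => ψ (exp (u • (-L)))) 0 (α / 2 ^ k))
      = fun _ => (0 : Fin N → ℝ) := funext hzero
  rw [this] at hcomp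
  have := tendsto_nhds_unique hcomp tendsto_const_nhds
  have hLy : ψ (-L) = -(L *ᵥ y) := by simp [ψ, mvApply, Matrix.neg_mulVec]
  rw [hLy] at this
  simpa using (neg_eq_zero.mp this)

lemma dotProduct_sum' {r : ℕ} (v : Fin N → ℝ) (f : Fin r → Fin N → ℝ) :
    v ⬝ᵥ (∑ i, f i) = ∑ i, v ⬝ᵥ f i := by
  simp only [dotProduct, Finset.sum_apply, Finset.mul_sum]
  exact Finset.sum_comm


/-- For the switched linear system `ẋ = -L(t) x` whose piecewise-constant
generator takes values in a finite set `{Ls 0, …, Ls (M-1)}` of symmetric positive semidefinite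
matrices, each occurring on infinitely many dwell intervals, suppose every solution converges
(equivalently, `Φ(t, t₀) x₀` converges for every initial vector `x₀`). If `η 0, …, η (r-1)` is
an orthonormal basis of `⋂ᵢ ker (Ls i)`, then for every initial condition `x₀`, the solution
converges to `∑ᵢ (ηᵢᵀ x₀) ηᵢ`, the orthogonal projection of `x₀` onto `⋂ᵢ ker (Ls i)`. -/
theorem limit_is_projection_onto_common_nullspace
    (N M r : ℕ) (α : ℝ) (hα : 0 < α)
    (t : ℕ → ℝ) (ht0 : t 0 = 0) (htmono : StrictMono t)
    (htlim : Tendsto t atTop atTop)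
    (hdwell : ∀ k : ℕ, α ≤ t (k + 1) - t k)
    (Ls : Fin M → Matrix (Fin N) (Fin N) ℝ)
    (hLs : ∀ i, (Ls i).PosSemidef)
    (σ : ℕ → Fin M)
    (hinf : ∀ i : Fin M, ∀ n : ℕ, ∃ k : ℕ, n ≤ k ∧ σ k = i)
    (Φ : ℝ → Matrix (Fin N) (Fin N) ℝ)
    (hΦ0 : Φ 0 = 1)
    (hΦ : ∀ k : ℕ, ∀ s ∈ Set.Icc (t k) (t (k + 1)),
      Φ s = NormedSpace.exp (-(s - t k) • Ls (σ k)) * Φ (t k))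
    (hconv : ∀ x0 : Fin N → ℝ, ∃ y : Fin N → ℝ, Tendsto (fun s => Φ s *ᵥ x0) atTop (nhds y))
    (η : Fin r → (Fin N → ℝ))
    (hortho : ∀ i j : Fin r, η i ⬝ᵥ η j = if i = j then (1 : ℝ) else 0)
    (hspan : Submodule.span ℝ (Set.range η) = ⨅ i : Fin M, LinearMap.ker (Ls i).mulVecLin) :
    ∀ x0 : Fin N → ℝ,
      Tendsto (fun s => Φ s *ᵥ x0) atTop (nhds (∑ i : Fin r, (η i ⬝ᵥ x0) • η i)) := by
  intro x0
  obtain ⟨y, hy⟩ := hconv x0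
  have hsymm : ∀ i, (Ls i)ᵀ = Ls i := fun i => by
    rw [← Matrix.conjTranspose_eq_transpose_of_trivial]; exact (hLs i).1
  -- exp factors fix common-kernel vectors and are symmetric
  have hEsym : ∀ (c : ℝ) (i : Fin M), (NormedSpace.exp (c • Ls i))ᵀ = NormedSpace.exp (c • Ls i) :=
    fun c i => exp_transpose_self (by rw [Matrix.transpose_smul, hsymm i])
  have hEfix : ∀ (c : ℝ) (i : Fin M) (z : Fin N → ℝ), Ls i *ᵥ z = 0 →
      NormedSpace.exp (c • Ls i) *ᵥ z = z := by
    intro c i z hz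
    exact exp_mulVec_of_kernel _ _ (by rw [Matrix.smul_mulVec, hz, smul_zero])
  -- invariance of inner products with common-kernel vectors
  have hPhiT : ∀ (z : Fin N → ℝ), (∀ i, Ls i *ᵥ z = 0) → ∀ k, (Φ (t k))ᵀ *ᵥ z = z := by
    intro z hz k
    induction k with
    | zero => rw [ht0, hΦ0]; simp
    | succ k ih =>
      have hmem : t (k + 1) ∈ Set.Icc (t k) (t (k + 1)) :=
        ⟨(htmono (Nat.lt_succ_self k)).le, le_refl _⟩
      rw [hΦ k (t (k + 1)) hmem, Matrix.transpose_mul, ← mulVec_mulVec,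
        hEsym _ (σ k), hEfix _ (σ k) z (hz (σ k)), ih]
  have hseg : ∀ s : ℝ, 0 ≤ s → ∃ k, t k ≤ s ∧ s ≤ t (k + 1) := by
    intro s hs
    have hex : ∃ m, s < t m := (htlim.eventually (eventually_gt_atTop s)).exists
    classical
    set m := Nat.find hex with hm
    have hmlt : s < t m := Nat.find_spec hex
    have hm0 : m ≠ 0 := by
      intro h0
      rw [h0, ht0] at hmlt; exact absurd hmlt (not_lt.mpr hs)
    obtain ⟨k, hk⟩ := Nat.exists_eq_succ_of_ne_zero hm0
    refine ⟨k, ?_, ?_⟩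
    · have := Nat.find_min hex (m := k) (by omega)
      exact not_lt.mp this
    · rw [hk] at hmlt; exact hmlt.le
  have hinv : ∀ (z : Fin N → ℝ), (∀ i, Ls i *ᵥ z = 0) → ∀ s : ℝ, 0 ≤ s →
      z ⬝ᵥ (Φ s *ᵥ x0) = z ⬝ᵥ x0 := by
    intro z hz s hs
    obtain ⟨k, hk1, hk2⟩ := hseg s hs
    have hT : (Φ s)ᵀ *ᵥ z = z := by
      rw [hΦ k s ⟨hk1, hk2⟩, Matrix.transpose_mul, ← mulVec_mulVec,
        hEsym _ (σ k), hEfix _ (σ k) z (hz (σ k)), hPhiT z hz k]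
    calc z ⬝ᵥ (Φ s *ᵥ x0) = (z ᵥ* Φ s) ⬝ᵥ x0 := (Matrix.dotProduct_mulVec z (Φ s) x0).symm ▸ rfl
      _ = ((Φ s)ᵀ *ᵥ z) ⬝ᵥ x0 := by rw [← Matrix.vecMul_transpose, Matrix.transpose_transpose]
      _ = z ⬝ᵥ x0 := by rw [hT]
  have hdotcont : ∀ z : Fin N → ℝ, Continuous (fun w : Fin N → ℝ => z ⬝ᵥ w) := by
    intro z
    unfold dotProduct
    exact continuous_finset_sum _ fun i _ => (continuous_const.mul (continuous_apply i))
  have hyval : ∀ (z : Fin N → ℝ), (∀ i, Ls i *ᵥ z = 0) → z ⬝ᵥ y = z ⬝ᵥ x0 := by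
    intro z hz
    have h1 : Tendsto (fun s => z ⬝ᵥ (Φ s *ᵥ x0)) atTop (nhds (z ⬝ᵥ y)) :=
      ((hdotcont z).tendsto y).comp hy
    have h2 : Tendsto (fun s => z ⬝ᵥ (Φ s *ᵥ x0)) atTop (nhds (z ⬝ᵥ x0)) := by
      refine Tendsto.congr' ?_ tendsto_const_nhds
      filter_upwards [eventually_ge_atTop (0:ℝ)] with s hs
      exact (hinv z hz s hs).symm
    exact tendsto_nhds_unique h1 h2
  -- y is in the common kernel
  have hker : ∀ i : Fin M, Ls i *ᵥ y = 0 := by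
    intro i
    classical
    have hk1 : ∀ n, n ≤ (hinf i n).choose := fun n => (hinf i n).choose_spec.1
    have hk2 : ∀ n, σ ((hinf i n).choose) = i := fun n => (hinf i n).choose_spec.2
    set kseq : ℕ → ℕ := fun n => (hinf i n).choose with hkseq
    have ht_k : Tendsto (fun n => t (kseq n)) atTop atTop :=
      tendsto_atTop_mono (fun n => htmono.monotone (hk1 n)) htlim
    have hA : Tendsto (fun n => Φ (t (kseq n)) *ᵥ x0) atTop (nhds y) := hy.comp ht_k
    have hB : Tendsto (fun n => Φ (t (kseq n) + α) *ᵥ x0) atTop (nhds y) :=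
      hy.comp (tendsto_atTop_add_const_right _ α ht_k)
    have heq : ∀ n, Φ (t (kseq n) + α) *ᵥ x0
        = NormedSpace.exp (-α • Ls i) *ᵥ (Φ (t (kseq n)) *ᵥ x0) := by
      intro n
      have hmem : t (kseq n) + α ∈ Set.Icc (t (kseq n)) (t (kseq n + 1)) :=
        ⟨by linarith, by linarith [hdwell (kseq n)]⟩
      have := hΦ (kseq n) (t (kseq n) + α) hmem
      have harg : -(t (kseq n) + α - t (kseq n)) = -α := by ring
      rw [harg, hk2 n] at this
      rw [this, ← mulVec_mulVec]
    have hc : Continuous (fun w : Fin N → ℝ => NormedSpace.exp (-α • Ls i) *ᵥ w) :=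
      (NormedSpace.exp (-α • Ls i)).mulVecLin.continuous_of_finiteDimensional
    have hfix : NormedSpace.exp (-α • Ls i) *ᵥ y = y := by
      have h3 : Tendsto (fun n => NormedSpace.exp (-α • Ls i) *ᵥ (Φ (t (kseq n)) *ᵥ x0))
          atTop (nhds (NormedSpace.exp (-α • Ls i) *ᵥ y)) := (hc.tendsto y).comp hA
      have h4 := hB.congr heq
      exact tendsto_nhds_unique h4 h3 ▸ rfl
    exact kernel_of_fixed (hsymm i) hα hfix
  -- y lies in the span of η and has the right coefficients
  have hymem : y ∈ Submodule.span ℝ (Set.range η) := by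
    rw [hspan, Submodule.mem_iInf]
    intro i
    rw [LinearMap.mem_ker, Matrix.mulVecLin_apply]
    exact hker i
  obtain ⟨c, hc⟩ := (Submodule.mem_span_range_iff_exists_fun ℝ).mp hymem
  have hηK : ∀ j : Fin r, ∀ i : Fin M, Ls i *ᵥ η j = 0 := by
    intro j i
    have hj : η j ∈ Submodule.span ℝ (Set.range η) :=
      Submodule.subset_span (Set.mem_range_self j)
    rw [hspan, Submodule.mem_iInf] at hj
    have := hj i
    rwa [LinearMap.mem_ker, Matrix.mulVecLin_apply] at this
  have hcoeff : ∀ j : Fin r, c j = η j ⬝ᵥ x0 := by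
    intro j
    have h1 : η j ⬝ᵥ y = c j := by
      rw [← hc, dotProduct_sum']
      simp only [dotProduct_smul, hortho, smul_eq_mul, mul_ite, mul_one, mul_zero]
      simp
    rw [← h1]
    exact hyval (η j) (hηK j)
  have hfin : (∑ i : Fin r, (η i ⬝ᵥ x0) • η i) = y := by
    rw [← hc]
    exact Finset.sum_congr rfl fun i _ => by rw [hcoeff i]
  rw [hfin]
  exact hy
end

section
/- Let L : [0,∞) → ℝ^{N×N} be piecewise constant with respect to a switching sequence 0 = t_0 < t_1 < ⋯, t_k → ∞, dwell times ≥ α > 0, taking values in a finite set {L_1, …, L_M} of symmetric positive semidefinite matrices, each occurring on infinitely many dwell intervals, and suppose Φ* := lim_{t→∞} Φ(t, t_0) exists, where Φ(t, t_0) is the state transition matrix of ẋ = −L(t)x. Then the fixed-point space {v : Φ* v = v} equals ∩_{i=1}^M ker(L_i), and Φ* equals the orthogonal projection onto ∩_{i=1}^M ker(L_i), i.e. Φ* = Σ_{i=1}^r η_i η_i^⊤ for any orthonormal basis η_1, …, η_r of ∩_{i=1}^M ker(L_i). -/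
open Matrix Filter


namespace SwProof
variable {N : ℕ} {L : Matrix (Fin N) (Fin N) ℝ}

noncomputable def Umat (hL : L.PosSemidef) : Matrix (Fin N) (Fin N) ℝ :=
  hL.1.eigenvectorUnitary

noncomputable def ev (hL : L.PosSemidef) : Fin N → ℝ := hL.1.eigenvalues

lemma hUU (hL : L.PosSemidef) : star (Umat hL) * Umat hL = 1 :=
  (Unitary.mem_iff.mp hL.1.eigenvectorUnitary.2).1

lemma hUU' (hL : L.PosSemidef) : Umat hL * star (Umat hL) = 1 :=
  (Unitary.mem_iff.mp hL.1.eigenvectorUnitary.2).2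

lemma hLrep (hL : L.PosSemidef) :
    L = Umat hL * diagonal (ev hL) * star (Umat hL) := by
  have := hL.1.spectral_theorem
  simpa [Umat, ev] using this

lemma Uinv (hL : L.PosSemidef) : (Umat hL)⁻¹ = star (Umat hL) :=
  Matrix.inv_eq_right_inv (hUU' hL)

lemma expRep (hL : L.PosSemidef) (s : ℝ) :
    NormedSpace.exp (-s • L) =
      Umat hL * diagonal (fun j => Real.exp (-s * ev hL j)) * star (Umat hL) := by
  have h1 : -s • L = Umat hL * diagonal (fun j => -s * ev hL j) * (Umat hL)⁻¹ := by
    rw [Uinv hL]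
    conv_lhs => rw [hLrep hL]
    rw [show (fun j => -s * ev hL j) = -s • ev hL from rfl, Matrix.diagonal_smul]
    simp [Matrix.mul_smul, Matrix.smul_mul]
  have hU : IsUnit (Umat hL) := (Matrix.isUnit_iff_isUnit_det _).mpr (Matrix.isUnit_det_of_right_inverse (hUU' hL))
  have h2 := Matrix.exp_conj (Umat hL) (diagonal fun j => -s * ev hL j) hU
  rw [h1, h2, Matrix.exp_diagonal, Uinv hL]
  congr 2
  funext j
  rw [Pi.exp_def]
  simp [Real.exp_eq_exp_ℝ]

end SwProof

namespace SwProof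
variable {N : ℕ} {L : Matrix (Fin N) (Fin N) ℝ}

noncomputable def cvec (hL : L.PosSemidef) (v : Fin N → ℝ) : Fin N → ℝ :=
  star (Umat hL) *ᵥ v

lemma U_cvec (hL : L.PosSemidef) (v : Fin N → ℝ) : Umat hL *ᵥ cvec hL v = v := by
  rw [cvec, mulVec_mulVec, hUU' hL, one_mulVec]

lemma U_inj (hL : L.PosSemidef) {x y : Fin N → ℝ} (h : Umat hL *ᵥ x = Umat hL *ᵥ y) :
    x = y := by
  have := congrArg (fun z => star (Umat hL) *ᵥ z) h
  simpa [mulVec_mulVec, hUU hL] using this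

lemma rep_mulVec (hL : L.PosSemidef) (w : Fin N → ℝ) (v : Fin N → ℝ) :
    (Umat hL * diagonal w * star (Umat hL)) *ᵥ v
      = Umat hL *ᵥ (fun j => w j * cvec hL v j) := by
  rw [← mulVec_mulVec, ← mulVec_mulVec]
  rw [show diagonal w *ᵥ (star (Umat hL) *ᵥ v) = fun j => w j * cvec hL v j from
    funext fun j => mulVec_diagonal _ _ j]

lemma ev_cvec_of_ker (hL : L.PosSemidef) {v : Fin N → ℝ} (hv : L *ᵥ v = 0) :
    ∀ j, ev hL j * cvec hL v j = 0 := by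
  have h : Umat hL *ᵥ (fun j => ev hL j * cvec hL v j) = Umat hL *ᵥ 0 := by
    rw [mulVec_zero, ← rep_mulVec hL, ← hLrep hL, hv]
  have := U_inj hL h
  intro j; exact congrFun this j

lemma exp_fix_of_ker (hL : L.PosSemidef) {v : Fin N → ℝ} (hv : L *ᵥ v = 0) (s : ℝ) :
    NormedSpace.exp (-s • L) *ᵥ v = v := by
  rw [expRep hL s, rep_mulVec hL]
  have : (fun j => Real.exp (-s * ev hL j) * cvec hL v j) = cvec hL v := by
    funext j
    rcases mul_eq_zero.mp (ev_cvec_of_ker hL hv j) with h | h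
    · simp [h]
    · simp [h]
  rw [this, U_cvec]

lemma ker_of_exp_fix (hL : L.PosSemidef) {s : ℝ} (hs : 0 < s) {v : Fin N → ℝ}
    (hv : NormedSpace.exp (-s • L) *ᵥ v = v) : L *ᵥ v = 0 := by
  rw [expRep hL s, rep_mulVec hL] at hv
  conv_rhs at hv => rw [← U_cvec hL v]
  have h := U_inj hL hv
  have hd : ∀ j, ev hL j * cvec hL v j = 0 := by
    intro j
    rcases eq_or_ne (cvec hL v j) 0 with hc | hc
    · rw [hc, mul_zero]
    · have heq : Real.exp (-s * ev hL j) * cvec hL v j = cvec hL v j := congrFun h j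
      have h1 : Real.exp (-s * ev hL j) = 1 :=
        mul_right_cancel₀ hc (heq.trans (one_mul _).symm)
      have h2 : -s * ev hL j = 0 := Real.exp_injective (h1.trans Real.exp_zero.symm)
      have h3 : ev hL j = 0 := by
        rcases mul_eq_zero.mp h2 with h4 | h4
        · exact absurd (neg_eq_zero.mp h4) hs.ne'
        · exact h4
      rw [h3, zero_mul]
  rw [hLrep hL, rep_mulVec hL]
  have : (fun j => ev hL j * cvec hL v j) = (0 : Fin N → ℝ) := funext hd
  rw [this, mulVec_zero]

lemma psd_exp_sub (hL : L.PosSemidef) {a s : ℝ} (ha : 0 ≤ a) (has : a ≤ s) :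
    (NormedSpace.exp (-a • L) - NormedSpace.exp (-s • L)).PosSemidef := by
  rw [expRep hL a, expRep hL s]
  have : Umat hL * diagonal (fun j => Real.exp (-a * ev hL j)) * star (Umat hL)
      - Umat hL * diagonal (fun j => Real.exp (-s * ev hL j)) * star (Umat hL)
      = Umat hL * diagonal (fun j => Real.exp (-a * ev hL j) - Real.exp (-s * ev hL j))
        * star (Umat hL) := by
    have hd : diagonal (fun j => Real.exp (-a * ev hL j) - Real.exp (-s * ev hL j))
        = diagonal (fun j => Real.exp (-a * ev hL j))
          - diagonal (fun j => Real.exp (-s * ev hL j)) := by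
      rw [← diagonal_sub]
    rw [hd]
    noncomm_ring
  rw [this, Matrix.star_eq_conjTranspose]
  refine (posSemidef_diagonal_iff.mpr fun j => ?_).mul_mul_conjTranspose_same _
  have hej : 0 ≤ ev hL j := hL.eigenvalues_nonneg j
  have : -s * ev hL j ≤ -a * ev hL j := by nlinarith
  simpa using Real.exp_le_exp.mpr this

lemma exp_symm (hL : L.PosSemidef) (s : ℝ) :
    (NormedSpace.exp (-s • L))ᵀ = NormedSpace.exp (-s • L) := by
  rw [← Matrix.exp_transpose]
  congr 1
  rw [transpose_smul]
  congr 1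
  have := hL.1
  rw [Matrix.IsHermitian] at this
  simpa using this

lemma exp_sq (hL : L.PosSemidef) (s : ℝ) :
    NormedSpace.exp (-s • L) * NormedSpace.exp (-s • L)
      = NormedSpace.exp (-(2 * s) • L) := by
  have h := Matrix.exp_add_of_commute (-s • L) (-s • L) (Commute.refl _)
  rw [← h]
  congr 1
  module

lemma psd_one_sub_exp (hL : L.PosSemidef) {s : ℝ} (hs : 0 ≤ s) :
    ((1 : Matrix (Fin N) (Fin N) ℝ) - NormedSpace.exp (-s • L)).PosSemidef := by
  have := psd_exp_sub hL (le_refl 0) hs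
  simpa [NormedSpace.exp_zero] using this

end SwProof

namespace SwProof
variable {N : ℕ}

lemma dot_self_mulVec (A : Matrix (Fin N) (Fin N) ℝ) (x : Fin N → ℝ) :
    (A *ᵥ x) ⬝ᵥ (A *ᵥ x) = x ⬝ᵥ ((Aᵀ * A) *ᵥ x) := by
  conv_rhs => rw [← mulVec_mulVec, dotProduct_mulVec, vecMul_transpose]

lemma dot_shift (A : Matrix (Fin N) (Fin N) ℝ) (x y : Fin N → ℝ) :
    (A *ᵥ x) ⬝ᵥ y = x ⬝ᵥ (Aᵀ *ᵥ y) := by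
  conv_rhs => rw [dotProduct_mulVec, vecMul_transpose]

lemma psd_dot {M : Matrix (Fin N) (Fin N) ℝ} (hM : M.PosSemidef) (x : Fin N → ℝ) :
    0 ≤ x ⬝ᵥ (M *ᵥ x) := by simpa using hM.dotProduct_mulVec_nonneg x

lemma psd_dot_zero {M : Matrix (Fin N) (Fin N) ℝ} (hM : M.PosSemidef) {x : Fin N → ℝ}
    (h : x ⬝ᵥ (M *ᵥ x) = 0) : M *ᵥ x = 0 :=
  (hM.dotProduct_mulVec_zero_iff x).mp (by simpa using h)

lemma sumvmv_mulVec {r : ℕ} (η : Fin r → Fin N → ℝ) (x : Fin N → ℝ) :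
    (∑ i, vecMulVec (η i) (η i)) *ᵥ x = ∑ i, (η i ⬝ᵥ x) • η i := by
  funext j
  simp only [mulVec, dotProduct, Finset.sum_apply, Matrix.sum_apply, Finset.sum_mul,
    vecMulVec_apply, Pi.smul_apply, smul_eq_mul, Finset.mul_sum]
  rw [Finset.sum_comm]
  exact Finset.sum_congr rfl fun i _ => Finset.sum_congr rfl fun k _ => by ring

end SwProof

namespace SwProof
variable {N : ℕ}

lemma dot_sum_smul (u : Fin N → ℝ) {r : ℕ} (η : Fin r → Fin N → ℝ) (c : Fin r → ℝ) :
    u ⬝ᵥ (∑ i, c i • η i) = ∑ i, c i * (u ⬝ᵥ η i) := by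
  simp only [dotProduct, Finset.sum_apply, Pi.smul_apply, smul_eq_mul, Finset.mul_sum]
  rw [Finset.sum_comm]
  exact Finset.sum_congr rfl fun i _ => Finset.sum_congr rfl fun k _ => by ring

end SwProof

namespace SwProof
variable {N : ℕ}

lemma tendsto_dot {X : Type*} {l : Filter X} {f g : X → (Fin N → ℝ)} {a b : Fin N → ℝ}
    (hf : Filter.Tendsto f l (nhds a)) (hg : Filter.Tendsto g l (nhds b)) :
    Filter.Tendsto (fun x => f x ⬝ᵥ g x) l (nhds (a ⬝ᵥ b)) := by
  have h : ∀ i, Filter.Tendsto (fun x => f x i * g x i) l (nhds (a i * b i)) :=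
    fun i => (tendsto_pi_nhds.mp hf i).mul (tendsto_pi_nhds.mp hg i)
  simpa [dotProduct] using tendsto_finset_sum Finset.univ (fun i _ => h i)

lemma tendsto_mulVec {X : Type*} {l : Filter X} {F : X → Matrix (Fin N) (Fin N) ℝ}
    {A : Matrix (Fin N) (Fin N) ℝ} (hF : Filter.Tendsto F l (nhds A)) (u : Fin N → ℝ) :
    Filter.Tendsto (fun x => F x *ᵥ u) l (nhds (A *ᵥ u)) := by
  have hent : ∀ i j, Filter.Tendsto (fun x => F x i j) l (nhds (A i j)) :=
    fun i j => tendsto_pi_nhds.mp (tendsto_pi_nhds.mp hF i) j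
  refine tendsto_pi_nhds.mpr fun i => ?_
  simpa [mulVec, dotProduct] using
    tendsto_finset_sum Finset.univ (fun j _ => (hent i j).mul tendsto_const_nhds)

lemma tendsto_mulVec_right {X : Type*} {l : Filter X} {B : Matrix (Fin N) (Fin N) ℝ}
    {f : X → (Fin N → ℝ)} {a : Fin N → ℝ} (hf : Filter.Tendsto f l (nhds a)) :
    Filter.Tendsto (fun x => B *ᵥ f x) l (nhds (B *ᵥ a)) := by
  refine tendsto_pi_nhds.mpr fun i => ?_
  simpa [mulVec, dotProduct] using
    tendsto_finset_sum Finset.univ (fun j _ => tendsto_const_nhds.mul (tendsto_pi_nhds.mp hf j))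

end SwProof


set_option maxHeartbeats 2000000 in
open SwProof in

/-- For the switched linear system `ẋ = -L(t) x` whose piecewise-constant
generator takes values in a finite set `{Ls 0, …, Ls (M-1)}` of symmetric positive semidefinite
matrices, each occurring on infinitely many dwell intervals, if `Φ* = lim_{t→∞} Φ(t, t₀)`
exists, then the fixed-point space `{v : Φ* v = v}` equals `⋂ᵢ ker (Ls i)`, and `Φ*` is the
orthogonal projection onto `⋂ᵢ ker (Ls i)`: `Φ* = ∑ᵢ ηᵢ ηᵢᵀ` for any orthonormal basis
`η 1, …, η r` of `⋂ᵢ ker (Ls i)`. -/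
theorem transitionMatrix_limit_is_projection
    (N M : ℕ) (α : ℝ) (hα : 0 < α)
    (t : ℕ → ℝ) (ht0 : t 0 = 0) (htmono : StrictMono t)
    (htlim : Tendsto t atTop atTop)
    (hdwell : ∀ k : ℕ, α ≤ t (k + 1) - t k)
    (Ls : Fin M → Matrix (Fin N) (Fin N) ℝ)
    (hLs : ∀ i, (Ls i).PosSemidef)
    (σ : ℕ → Fin M)
    (hinf : ∀ i : Fin M, ∀ n : ℕ, ∃ k : ℕ, n ≤ k ∧ σ k = i)
    (Φ : ℝ → Matrix (Fin N) (Fin N) ℝ)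
    (hΦ0 : Φ 0 = 1)
    (hΦ : ∀ k : ℕ, ∀ s ∈ Set.Icc (t k) (t (k + 1)),
      Φ s = NormedSpace.exp (-(s - t k) • Ls (σ k)) * Φ (t k))
    (Φstar : Matrix (Fin N) (Fin N) ℝ)
    (hΦstar : Tendsto Φ atTop (nhds Φstar)) :
    (∀ v : Fin N → ℝ,
        Φstar *ᵥ v = v ↔ v ∈ ⨅ i : Fin M, LinearMap.ker (Ls i).mulVecLin) ∧
    (∀ (r : ℕ) (η : Fin r → (Fin N → ℝ)),
        (∀ i j : Fin r, η i ⬝ᵥ η j = if i = j then (1 : ℝ) else 0) →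
        Submodule.span ℝ (Set.range η) = ⨅ i : Fin M, LinearMap.ker (Ls i).mulVecLin →
        Φstar = ∑ i : Fin r, vecMulVec (η i) (η i)) := by
  classical
  have hKmem : ∀ v : Fin N → ℝ,
      (v ∈ ⨅ i : Fin M, LinearMap.ker (Ls i).mulVecLin) ↔ ∀ i, Ls i *ᵥ v = 0 := by
    intro v
    simp [Submodule.mem_iInf, LinearMap.mem_ker, Matrix.mulVecLin_apply]
  have htle : ∀ k, t k ≤ t (k + 1) := fun k => (htmono (Nat.lt_succ_self k)).le
  have hrec : ∀ k, Φ (t (k + 1))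
      = NormedSpace.exp (-(t (k + 1) - t k) • Ls (σ k)) * Φ (t k) :=
    fun k => hΦ k (t (k + 1)) ⟨htle k, le_refl _⟩
  have hP0 : Φ (t 0) = 1 := by rw [ht0, hΦ0]
  have hPtend : Tendsto (fun k => Φ (t k)) atTop (nhds Φstar) := hΦstar.comp htlim
  have hdpos : ∀ k, (0:ℝ) < t (k + 1) - t k := fun k => lt_of_lt_of_le hα (hdwell k)
  have hmtend : ∀ u : Fin N → ℝ,
      Tendsto (fun k => Φ (t k) *ᵥ u) atTop (nhds (Φstar *ᵥ u)) := by
    intro u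
    exact tendsto_mulVec hPtend u
  have hfixP : ∀ v : Fin N → ℝ, (∀ i, Ls i *ᵥ v = 0) → ∀ k, Φ (t k) *ᵥ v = v := by
    intro v hv k
    induction k with
    | zero => rw [hP0, one_mulVec]
    | succ k ih =>
        rw [hrec k, ← mulVec_mulVec, ih, exp_fix_of_ker (hLs (σ k)) (hv (σ k))]
  have hfixstar : ∀ v : Fin N → ℝ, (∀ i, Ls i *ᵥ v = 0) → Φstar *ᵥ v = v := by
    intro v hv
    refine tendsto_nhds_unique (hmtend v) ?_
    rw [show (fun k => Φ (t k) *ᵥ v) = fun _ => v from funext (hfixP v hv)]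
    exact tendsto_const_nhds
  -- Part 1, forward direction
  have hfwd : ∀ v : Fin N → ℝ, Φstar *ᵥ v = v → ∀ i, Ls i *ᵥ v = 0 := by
    intro v hfix
    set w : ℕ → Fin N → ℝ := fun k => Φ (t k) *ᵥ v with hw
    have hw0 : w 0 = v := by rw [hw]; simp only; rw [hP0, one_mulVec]
    have hwtend : Tendsto w atTop (nhds v) := by
      have := hmtend v; rwa [hfix] at this
    set q : ℕ → ℝ := fun k => w k ⬝ᵥ w k with hq
    have hqtend : Tendsto q atTop (nhds (v ⬝ᵥ v)) := tendsto_dot hwtend hwtend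
    have hwk : ∀ k, w (k + 1)
        = NormedSpace.exp (-(t (k + 1) - t k) • Ls (σ k)) *ᵥ w k := by
      intro k
      rw [hw]; simp only; rw [hrec k, ← mulVec_mulVec]
    have hq1 : ∀ k, q (k + 1)
        = w k ⬝ᵥ (NormedSpace.exp (-(2 * (t (k + 1) - t k)) • Ls (σ k)) *ᵥ w k) := by
      intro k
      rw [hq]; simp only
      rw [hwk k, dot_self_mulVec, exp_symm (hLs (σ k)), exp_sq (hLs (σ k))]
    have hkey : ∀ k, q k - q (k + 1)
        = w k ⬝ᵥ (((1 : Matrix (Fin N) (Fin N) ℝ)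
            - NormedSpace.exp (-(2 * (t (k + 1) - t k)) • Ls (σ k))) *ᵥ w k) := by
      intro k
      rw [Matrix.sub_mulVec, dotProduct_sub, one_mulVec, hq1 k]
    have hmono : ∀ k, q (k + 1) ≤ q k := by
      intro k
      have h2 : (0:ℝ) ≤ 2 * (t (k + 1) - t k) := by nlinarith [hdpos k]
      have := psd_dot (psd_one_sub_exp (hLs (σ k)) h2) (w k)
      rw [← hkey k] at this
      linarith
    have hant : Antitone q := antitone_nat_of_succ_le hmono
    have hconst : ∀ k, q k = v ⬝ᵥ v := by
      intro k
      have hub : q k ≤ v ⬝ᵥ v := by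
        have : q k ≤ q 0 := hant (Nat.zero_le k)
        rwa [show q 0 = v ⬝ᵥ v by rw [hq]; simp only; rw [hw0]] at this
      have hlb : v ⬝ᵥ v ≤ q k :=
        le_of_tendsto hqtend (Filter.eventually_atTop.mpr ⟨k, fun m hm => hant hm⟩)
      linarith
    have hker : ∀ k, Ls (σ k) *ᵥ w k = 0 := by
      intro k
      have h2 : (0:ℝ) < 2 * (t (k + 1) - t k) := by nlinarith [hdpos k]
      have hz : w k ⬝ᵥ (((1 : Matrix (Fin N) (Fin N) ℝ)
          - NormedSpace.exp (-(2 * (t (k + 1) - t k)) • Ls (σ k))) *ᵥ w k) = 0 := by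
        rw [← hkey k, hconst k, hconst (k + 1), sub_self]
      have := psd_dot_zero (psd_one_sub_exp (hLs (σ k)) h2.le) hz
      rw [Matrix.sub_mulVec, one_mulVec, sub_eq_zero] at this
      exact ker_of_exp_fix (hLs (σ k)) h2 this.symm
    have hwv : ∀ k, w k = v := by
      intro k
      induction k with
      | zero => exact hw0
      | succ k ih => rw [hwk k, exp_fix_of_ker (hLs (σ k)) (hker k), ih]
    intro i
    obtain ⟨k, -, hk⟩ := hinf i 0
    have := hker k
    rwa [hwv k, hk] at this
  have hmain1 : ∀ v : Fin N → ℝ,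
      Φstar *ᵥ v = v ↔ v ∈ ⨅ i : Fin M, LinearMap.ker (Ls i).mulVecLin := by
    intro v
    rw [hKmem v]
    exact ⟨hfwd v, hfixstar v⟩
  -- Claim C : range of Φstar is in the common kernel
  have hC : ∀ (u : Fin N → ℝ) (i : Fin M), Ls i *ᵥ (Φstar *ᵥ u) = 0 := by
    intro u i
    set z := Φstar *ᵥ u with hz
    have hφ : ∀ n, n ≤ (hinf i n).choose ∧ σ (hinf i n).choose = i :=
      fun n => (hinf i n).choose_spec
    set φ : ℕ → ℕ := fun n => (hinf i n).choose with hφdef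
    have hφtop : Tendsto φ atTop atTop :=
      tendsto_atTop_mono (fun n => (hφ n).1) tendsto_id
    have hφtop1 : Tendsto (fun n => φ n + 1) atTop atTop :=
      tendsto_atTop_mono (fun n => le_trans (hφ n).1 (Nat.le_succ _)) tendsto_id
    set y : ℕ → Fin N → ℝ := fun n => Φ (t (φ n)) *ᵥ u with hy
    set x : ℕ → Fin N → ℝ := fun n => Φ (t (φ n + 1)) *ᵥ u with hx
    have hytend : Tendsto y atTop (nhds z) := (hmtend u).comp hφtop
    have hxtend : Tendsto x atTop (nhds z) := (hmtend u).comp hφtop1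
    have hxy : ∀ n, x n
        = NormedSpace.exp (-(t (φ n + 1) - t (φ n)) • Ls i) *ᵥ y n := by
      intro n
      rw [hx, hy]; simp only
      rw [hrec (φ n), (hφ n).2, ← mulVec_mulVec]
    set Eα := NormedSpace.exp (-α • Ls i) with hEα
    have hub : ∀ n, y n ⬝ᵥ (((1 : Matrix (Fin N) (Fin N) ℝ) - Eα) *ᵥ y n)
        ≤ y n ⬝ᵥ y n - y n ⬝ᵥ x n := by
      intro n
      have hpsd := psd_dot
        (psd_exp_sub (hLs i) hα.le (hdwell (φ n))) (y n)
      rw [Matrix.sub_mulVec, dotProduct_sub] at hpsd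
      rw [Matrix.sub_mulVec, dotProduct_sub, one_mulVec, hxy n]
      linarith
    have hlb : ∀ n, 0 ≤ y n ⬝ᵥ (((1 : Matrix (Fin N) (Fin N) ℝ) - Eα) *ᵥ y n) :=
      fun n => psd_dot (psd_one_sub_exp (hLs i) hα.le) (y n)
    have hbtend : Tendsto (fun n => y n ⬝ᵥ y n - y n ⬝ᵥ x n) atTop (nhds 0) := by
      have h1 : Tendsto (fun n => y n ⬝ᵥ y n) atTop (nhds (z ⬝ᵥ z)) :=
        tendsto_dot hytend hytend
      have h2 : Tendsto (fun n => y n ⬝ᵥ x n) atTop (nhds (z ⬝ᵥ z)) :=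
        tendsto_dot hytend hxtend
      simpa using h1.sub h2
    have hctend : Tendsto (fun n => y n ⬝ᵥ (((1 : Matrix (Fin N) (Fin N) ℝ) - Eα) *ᵥ y n))
        atTop (nhds (z ⬝ᵥ (((1 : Matrix (Fin N) (Fin N) ℝ) - Eα) *ᵥ z))) := by
      exact tendsto_dot hytend (tendsto_mulVec_right hytend)
    have hczero : z ⬝ᵥ (((1 : Matrix (Fin N) (Fin N) ℝ) - Eα) *ᵥ z) = 0 := by
      have hle : z ⬝ᵥ (((1 : Matrix (Fin N) (Fin N) ℝ) - Eα) *ᵥ z) ≤ 0 :=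
        le_of_tendsto_of_tendsto' hctend hbtend hub
      have hge : 0 ≤ z ⬝ᵥ (((1 : Matrix (Fin N) (Fin N) ℝ) - Eα) *ᵥ z) :=
        ge_of_tendsto' hctend hlb
      linarith
    have := psd_dot_zero (psd_one_sub_exp (hLs i) hα.le) hczero
    rw [Matrix.sub_mulVec, one_mulVec, sub_eq_zero] at this
    exact ker_of_exp_fix (hLs i) hα this.symm
  refine ⟨hmain1, ?_⟩
  intro r η hortho hspan
  have hηK : ∀ j : Fin r, ∀ i, Ls i *ᵥ η j = 0 := by
    intro j
    have hmem : η j ∈ Submodule.span ℝ (Set.range η) := Submodule.subset_span ⟨j, rfl⟩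
    rw [hspan] at hmem
    exact (hKmem _).mp hmem
  have hdotη : ∀ (x : Fin N → ℝ) (j : Fin r),
      η j ⬝ᵥ (∑ i, (η i ⬝ᵥ x) • η i) = η j ⬝ᵥ x := by
    intro x j
    rw [dot_sum_smul]
    have : ∀ i : Fin r, (η i ⬝ᵥ x) * (η j ⬝ᵥ η i)
        = if j = i then η i ⬝ᵥ x else 0 := by
      intro i
      rw [hortho j i]
      by_cases h : j = i <;> simp [h]
    rw [Finset.sum_congr rfl fun i _ => this i]
    simp
  have hact : ∀ x : Fin N → ℝ,
      Φstar *ᵥ x = (∑ i, vecMulVec (η i) (η i)) *ᵥ x := by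
    intro x
    set p := ∑ i, (η i ⬝ᵥ x) • η i with hp
    have hpker : ∀ i, Ls i *ᵥ p = 0 := by
      intro i
      have : (Ls i).mulVecLin p = 0 := by
        rw [hp, map_sum]
        refine Finset.sum_eq_zero fun j _ => ?_
        rw [LinearMap.map_smul]
        simp [Matrix.mulVecLin_apply, hηK j i]
      simpa [Matrix.mulVecLin_apply] using this
    set u := x - p with hu
    have huperp : ∀ j, η j ⬝ᵥ u = 0 := by
      intro j
      rw [hu, dotProduct_sub, hp]
      rw [hdotη x j, sub_self]
    have hzu : Φstar *ᵥ u = 0 := by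
      set z := Φstar *ᵥ u with hzdef
      have hzK : ∀ i, Ls i *ᵥ z = 0 := fun i => hC u i
      have hzspan : z ∈ Submodule.span ℝ (Set.range η) := by
        rw [hspan]; exact (hKmem z).mpr hzK
      have huz : u ⬝ᵥ z = 0 := by
        obtain ⟨c, hc⟩ := (Submodule.mem_span_range_iff_exists_fun ℝ).mp hzspan
        rw [← hc, dot_sum_smul]
        refine Finset.sum_eq_zero fun j _ => ?_
        rw [dotProduct_comm, huperp j, mul_zero]
      have hTz : ∀ k, (Φ (t k))ᵀ *ᵥ z = z := by
        intro k
        induction k with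
        | zero => rw [hP0, transpose_one, one_mulVec]
        | succ k ih =>
            rw [hrec k, transpose_mul, ← mulVec_mulVec, exp_symm (hLs (σ k)),
              exp_fix_of_ker (hLs (σ k)) (hzK (σ k)), ih]
      have hdotk : ∀ k, (Φ (t k) *ᵥ u) ⬝ᵥ z = 0 := by
        intro k
        rw [dot_shift, hTz k, huz]
      have hlim : Tendsto (fun k => (Φ (t k) *ᵥ u) ⬝ᵥ z) atTop (nhds (z ⬝ᵥ z)) :=
        tendsto_dot (hmtend u) tendsto_const_nhds
      have hzz : z ⬝ᵥ z = 0 := by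
        have h0 : Tendsto (fun k => (Φ (t k) *ᵥ u) ⬝ᵥ z) atTop (nhds 0) := by
          rw [show (fun k => (Φ (t k) *ᵥ u) ⬝ᵥ z) = fun _ => (0:ℝ) from funext hdotk]
          exact tendsto_const_nhds
        exact tendsto_nhds_unique hlim h0
      exact dotProduct_self_eq_zero.mp hzz
    have hxpu : x = p + u := by rw [hu]; ring
    rw [sumvmv_mulVec, ← hp]
    calc Φstar *ᵥ x = Φstar *ᵥ p + Φstar *ᵥ u := by
          rw [hxpu, Matrix.mulVec_add]
      _ = p := by
          rw [hzu, hfixstar p hpker, add_zero]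
  apply Matrix.ext
  intro i j
  have := congrFun (hact (Pi.single j 1)) i
  simpa using this
end

section
/- Let L_1, …, L_p ∈ ℝ^{N×N} be symmetric positive semidefinite and Δ_1, …, Δ_p > 0, and set Φ = exp(−Δ_p L_p) ⋯ exp(−Δ_2 L_2) exp(−Δ_1 L_1). If η ∈ ℝ^N satisfies ‖Φη‖ = ‖η‖, then L_j η = 0 for every j = 1, …, p; that is, η ∈ ∩_{j=1}^p ker(L_j). -/
open Matrix Filter

/-- The Euclidean norm on `Fin n → ℝ`. -/
noncomputable def eNorm {n : ℕ} (v : Fin n → ℝ) : ℝ := Real.sqrt (∑ i, v i ^ 2)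

lemma eNorm_le_iff {n : ℕ} (v w : Fin n → ℝ) :
    eNorm v ≤ eNorm w ↔ ∑ i, v i ^ 2 ≤ ∑ i, w i ^ 2 := by
  unfold eNorm
  rw [Real.sqrt_le_sqrt_iff (by positivity)]

lemma eNorm_eq_iff {n : ℕ} (v w : Fin n → ℝ) :
    eNorm v = eNorm w ↔ ∑ i, v i ^ 2 = ∑ i, w i ^ 2 := by
  unfold eNorm
  rw [Real.sqrt_inj (by positivity) (by positivity)]

lemma sum_sq_mulVec_unitary {n : ℕ} (U : Matrix (Fin n) (Fin n) ℝ)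
    (hU : U ∈ Matrix.unitaryGroup (Fin n) ℝ) (v : Fin n → ℝ) :
    ∑ i, (U *ᵥ v) i ^ 2 = ∑ i, v i ^ 2 := by
  have h : ∀ w : Fin n → ℝ, ∑ i, w i ^ 2 = w ⬝ᵥ w := by
    intro w; simp [dotProduct, sq]
  have hUt : Uᵀ * U = 1 := by
    have := Matrix.mem_unitaryGroup_iff'.mp hU
    simpa [Matrix.star_eq_conjTranspose, Matrix.conjTranspose_eq_transpose_of_trivial] using this
  rw [h, h, Matrix.dotProduct_mulVec, ← Matrix.vecMul_transpose, Matrix.vecMul_vecMul, hUt,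
    Matrix.vecMul_one]

lemma diagonal_mulVec' {n : ℕ} (f w : Fin n → ℝ) :
    Matrix.diagonal f *ᵥ w = fun i => f i * w i := by
  funext i; rw [Matrix.mulVec_diagonal]

section PerMatrix

variable {n : ℕ} {M : Matrix (Fin n) (Fin n) ℝ}

lemma exp_smul_posSemidef (hM : M.PosSemidef) (c : ℝ) :
    NormedSpace.exp (c • M) =
      (hM.1.eigenvectorUnitary : Matrix (Fin n) (Fin n) ℝ) *
        diagonal (fun i => Real.exp (c * hM.1.eigenvalues i)) *
        star (hM.1.eigenvectorUnitary : Matrix (Fin n) (Fin n) ℝ) := by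
  obtain ⟨U, hUmem, hUeq⟩ : ∃ U : Matrix (Fin n) (Fin n) ℝ,
      U ∈ Matrix.unitaryGroup (Fin n) ℝ ∧
        (hM.1.eigenvectorUnitary : Matrix (Fin n) (Fin n) ℝ) = U :=
    ⟨_, hM.1.eigenvectorUnitary.2, rfl⟩
  rw [hUeq]
  have hUU : U * star U = 1 := Matrix.mem_unitaryGroup_iff.mp hUmem
  have hinv : U⁻¹ = star U := Matrix.inv_eq_right_inv hUU
  have hdet : U.det * (star U).det = 1 := by rw [← Matrix.det_mul, hUU, Matrix.det_one]
  have hunit : IsUnit U :=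
    (Matrix.isUnit_iff_isUnit_det U).mpr (IsUnit.of_mul_eq_one _ hdet)
  have hd : diagonal (fun i => c * hM.1.eigenvalues i) = c • diagonal hM.1.eigenvalues := by
    rw [← Matrix.diagonal_smul]
    congr 1
  have h1 : c • M = U * diagonal (fun i => c * hM.1.eigenvalues i) * U⁻¹ := by
    rw [hinv, hd, Matrix.mul_smul, Matrix.smul_mul]
    conv_lhs => rw [hM.1.spectral_theorem, Unitary.conjStarAlgAut_apply, RCLike.ofReal_real_eq_id, hUeq]
    congr 2
  rw [h1, Matrix.exp_conj U _ hunit, hinv, Matrix.exp_diagonal]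
  congr 2
  rw [Pi.exp_def]
  funext i
  rw [← Real.exp_eq_exp_ℝ]

lemma key_lemma (hM : M.PosSemidef) {Δ : ℝ} (hΔ : 0 < Δ) (x : Fin n → ℝ) :
    eNorm (NormedSpace.exp (-Δ • M) *ᵥ x) ≤ eNorm x ∧
    (eNorm (NormedSpace.exp (-Δ • M) *ᵥ x) = eNorm x →
      M *ᵥ x = 0 ∧ NormedSpace.exp (-Δ • M) *ᵥ x = x) := by
  classical
  obtain ⟨U, hUmem, hUeq⟩ : ∃ U : Matrix (Fin n) (Fin n) ℝ,
      U ∈ Matrix.unitaryGroup (Fin n) ℝ ∧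
        (hM.1.eigenvectorUnitary : Matrix (Fin n) (Fin n) ℝ) = U :=
    ⟨_, hM.1.eigenvectorUnitary.2, rfl⟩
  obtain ⟨lam, hlamdef⟩ : ∃ l : Fin n → ℝ, hM.1.eigenvalues = l := ⟨_, rfl⟩
  have hUU : U * star U = 1 := Matrix.mem_unitaryGroup_iff.mp hUmem
  have hlampos : ∀ i, 0 ≤ lam i := fun i => hlamdef ▸ hM.eigenvalues_nonneg i
  set y := star U *ᵥ x with hy
  have hx : x = U *ᵥ y := by
    rw [hy, Matrix.mulVec_mulVec, hUU, Matrix.one_mulVec]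
  have hsum : ∀ v : Fin n → ℝ, ∑ i, (U *ᵥ v) i ^ 2 = ∑ i, v i ^ 2 :=
    sum_sq_mulVec_unitary U hUmem
  have hxsum : ∑ i, x i ^ 2 = ∑ i, y i ^ 2 := by
    conv_lhs => rw [hx]
    exact hsum y
  have hexpeq : NormedSpace.exp (-Δ • M) =
      U * diagonal (fun i => Real.exp (-Δ * lam i)) * star U := by
    rw [exp_smul_posSemidef hM (-Δ), hUeq, hlamdef]
  have hspec : M = U * diagonal lam * star U := by
    conv_lhs => rw [hM.1.spectral_theorem, Unitary.conjStarAlgAut_apply, RCLike.ofReal_real_eq_id, hUeq, hlamdef]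
    congr 2
  have hExp : NormedSpace.exp (-Δ • M) *ᵥ x =
      U *ᵥ (fun i => Real.exp (-Δ * lam i) * y i) := by
    rw [hexpeq, ← Matrix.mulVec_mulVec, ← Matrix.mulVec_mulVec, ← hy, diagonal_mulVec']
  have hMx : M *ᵥ x = U *ᵥ (fun i => lam i * y i) := by
    conv_lhs => rw [hspec]
    rw [← Matrix.mulVec_mulVec, ← Matrix.mulVec_mulVec, ← hy, diagonal_mulVec']
  have hExpSum : ∑ i, (NormedSpace.exp (-Δ • M) *ᵥ x) i ^ 2 =
      ∑ i, (Real.exp (-Δ * lam i) * y i) ^ 2 := by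
    rw [hExp]; exact hsum _
  have hterm : ∀ i, (Real.exp (-Δ * lam i) * y i) ^ 2 ≤ y i ^ 2 := by
    intro i
    have hlam1 : 0 ≤ lam i := hlampos i
    have h1 : Real.exp (-Δ * lam i) ≤ 1 := by
      rw [Real.exp_le_one_iff]
      nlinarith
    have h0 : 0 < Real.exp (-Δ * lam i) := Real.exp_pos _
    have he2 : Real.exp (-Δ * lam i) ^ 2 ≤ 1 := by nlinarith
    rw [mul_pow]
    nlinarith [sq_nonneg (y i), he2]
  constructor
  · rw [eNorm_le_iff, hExpSum, hxsum]
    exact Finset.sum_le_sum fun i _ => hterm i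
  · intro heq
    rw [eNorm_eq_iff, hExpSum, hxsum] at heq
    have hall : ∀ i, (Real.exp (-Δ * lam i) * y i) ^ 2 = y i ^ 2 := by
      have := (Finset.sum_eq_sum_iff_of_le (fun i _ => hterm i)).mp heq
      exact fun i => this i (Finset.mem_univ i)
    have hzero : ∀ i, lam i * y i = 0 := by
      intro i
      by_cases hyi : y i = 0
      · simp [hyi]
      · have h := hall i
        have hlam1 : 0 ≤ lam i := hlampos i
        have h0 : 0 < Real.exp (-Δ * lam i) := Real.exp_pos _
        have hle : Real.exp (-Δ * lam i) ≤ 1 := by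
          rw [Real.exp_le_one_iff]; nlinarith
        have hy2 : (0:ℝ) < y i ^ 2 := by positivity
        rw [mul_pow] at h
        have hsq : Real.exp (-Δ * lam i) ^ 2 = 1 := by
          have := mul_right_cancel₀ (ne_of_gt hy2) (by linarith [h] : Real.exp (-Δ * lam i) ^ 2 * y i ^ 2 = 1 * y i ^ 2)
          simpa using this
        have he1 : Real.exp (-Δ * lam i) = 1 := by nlinarith
        have hz : -Δ * lam i = 0 := Real.exp_injective (by rw [he1, Real.exp_zero])
        have : lam i = 0 := by
          rcases mul_eq_zero.mp hz with h' | h'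
          · exfalso; linarith
          · exact h'
        simp [this]
    constructor
    · rw [hMx]
      have : (fun i => lam i * y i) = (0 : Fin n → ℝ) := funext hzero
      rw [this, Matrix.mulVec_zero]
    · rw [hExp]
      have : (fun i => Real.exp (-Δ * lam i) * y i) = y := by
        funext i
        by_cases hyi : y i = 0
        · simp [hyi]
        · have hl : lam i = 0 := by
            rcases mul_eq_zero.mp (hzero i) with h' | h'
            · exact h'
            · exact absurd h' hyi
          simp [hl]
      rw [this, ← hx]

end PerMatrix

lemma list_contraction {n : ℕ} (l : List (Matrix (Fin n) (Fin n) ℝ))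
    (hcon : ∀ A ∈ l, ∀ x, eNorm (A *ᵥ x) ≤ eNorm x) (x : Fin n → ℝ) :
    eNorm (l.reverse.prod *ᵥ x) ≤ eNorm x := by
  induction l generalizing x with
  | nil => simp [Matrix.one_mulVec]
  | cons A l ih =>
    rw [List.reverse_cons, List.prod_append, List.prod_singleton, ← Matrix.mulVec_mulVec]
    calc eNorm (l.reverse.prod *ᵥ (A *ᵥ x)) ≤ eNorm (A *ᵥ x) :=
          ih (fun B hB => hcon B (List.mem_cons_of_mem _ hB)) _
      _ ≤ eNorm x := hcon A (List.mem_cons_self) x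

lemma list_equality {n : ℕ} (l : List (Matrix (Fin n) (Fin n) ℝ))
    (hcon : ∀ A ∈ l, ∀ x, eNorm (A *ᵥ x) ≤ eNorm x)
    (hfix : ∀ A ∈ l, ∀ x, eNorm (A *ᵥ x) = eNorm x → A *ᵥ x = x)
    (x : Fin n → ℝ) (h : eNorm (l.reverse.prod *ᵥ x) = eNorm x) :
    ∀ A ∈ l, A *ᵥ x = x := by
  induction l with
  | nil => simp
  | cons A l ih =>
    have hrw : (A :: l).reverse.prod *ᵥ x = l.reverse.prod *ᵥ (A *ᵥ x) := by
      rw [List.reverse_cons, List.prod_append, List.prod_singleton, ← Matrix.mulVec_mulVec]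
    have h1 : eNorm (A *ᵥ x) = eNorm x := by
      have hle1 : eNorm (l.reverse.prod *ᵥ (A *ᵥ x)) ≤ eNorm (A *ᵥ x) :=
        list_contraction l (fun B hB => hcon B (List.mem_cons_of_mem _ hB)) _
      have hle2 : eNorm (A *ᵥ x) ≤ eNorm x := hcon A (List.mem_cons_self) x
      rw [hrw] at h
      linarith
    have hAx : A *ᵥ x = x := hfix A (List.mem_cons_self) x h1
    intro B hB
    rcases List.mem_cons.mp hB with rfl | hB'
    · exact hAx
    · exact ih (fun C hC => hcon C (List.mem_cons_of_mem _ hC))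
        (fun C hC => hfix C (List.mem_cons_of_mem _ hC))
        (by rw [hrw, hAx] at h; exact h) B hB'

/-- Let `L 0, …, L (p-1)` be symmetric positive semidefinite, `Δ j > 0`, and
`Φ = exp(-Δ_{p-1} L_{p-1}) ⋯ exp(-Δ_0 L_0)`.  If `‖Φ η‖ = ‖η‖` (Euclidean norm), then
`L j η = 0` for every `j`, i.e. `η ∈ ⋂ⱼ ker Lⱼ`. -/
theorem norm_preserved_implies_common_nullspace
    (N p : ℕ)
    (L : Fin p → Matrix (Fin N) (Fin N) ℝ)
    (hL : ∀ j, (L j).PosSemidef)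
    (Δ : Fin p → ℝ) (hΔ : ∀ j, 0 < Δ j)
    (Φ : Matrix (Fin N) (Fin N) ℝ)
    (hΦ : Φ = ((List.ofFn fun j : Fin p => NormedSpace.exp (-(Δ j) • L j)).reverse).prod)
    (η : Fin N → ℝ)
    (hnorm : eNorm (Φ *ᵥ η) = eNorm η) :
    ∀ j : Fin p, L j *ᵥ η = 0 := by
  set l := List.ofFn fun j : Fin p => NormedSpace.exp (-(Δ j) • L j) with hl
  have hcon : ∀ A ∈ l, ∀ x, eNorm (A *ᵥ x) ≤ eNorm x := by
    rw [hl, List.forall_mem_ofFn_iff]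
    intro j x
    exact (key_lemma (hL j) (hΔ j) x).1
  have hfix : ∀ A ∈ l, ∀ x, eNorm (A *ᵥ x) = eNorm x → A *ᵥ x = x := by
    rw [hl]
    rw [List.forall_mem_ofFn_iff]
    intro j x hx
    exact ((key_lemma (hL j) (hΔ j) x).2 hx).2
  have hfixed : ∀ A ∈ l, A *ᵥ η = η := by
    apply list_equality l hcon hfix η
    rw [← hΦ]
    exact hnorm
  intro j
  have hmem : NormedSpace.exp (-(Δ j) • L j) ∈ l := by
    rw [hl]; exact List.mem_ofFn.mpr ⟨j, rfl⟩
  have hfj := hfixed _ hmem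
  have : eNorm (NormedSpace.exp (-(Δ j) • L j) *ᵥ η) = eNorm η := by rw [hfj]
  exact ((key_lemma (hL j) (hΔ j) η).2 this).1
end

section
/- Let L_1, …, L_p ∈ ℝ^{N×N} be symmetric positive semidefinite and Δ_1, …, Δ_p > 0, and set Φ = exp(−Δ_p L_p) ⋯ exp(−Δ_1 L_1). Let m = dim(∩_{j=1}^p ker(L_j)), and let 1 ≥ μ_1 ≥ μ_2 ≥ ⋯ ≥ μ_N ≥ 0 be the eigenvalues of the symmetric positive semidefinite matrix Φ^⊤Φ, listed in decreasing order with multiplicity. Then μ_1 = ⋯ = μ_m = 1 and μ_{m+1} < 1. -/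
open Matrix Filter

set_option linter.unusedSectionVars false
namespace Stmt8
open Polynomial
variable {n : Type*} [Fintype n] [DecidableEq n]

-- placeholders from aux2 (assume compiled): re-include by pasting aux2 body
lemma herm_transpose {M : Matrix n n ℝ} (h : M.IsHermitian) : Mᵀ = M := by
  ext i k
  have := congrFun (congrFun h i) k
  simpa [Matrix.conjTranspose_apply] using this

lemma star_eq_transpose (M : Matrix n n ℝ) : star M = Mᵀ := by
  ext i k
  simp [Matrix.star_apply]

lemma dot_tmul (A : Matrix n n ℝ) (u w : n → ℝ) :
    u ⬝ᵥ (Aᵀ *ᵥ w) = (A *ᵥ u) ⬝ᵥ w := by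
  rw [Matrix.dotProduct_mulVec, Matrix.vecMul_transpose]

lemma unit_dot {U : Matrix n n ℝ} (h : Uᵀ * U = 1) (z : n → ℝ) :
    (U *ᵥ z) ⬝ᵥ (U *ᵥ z) = z ⬝ᵥ z := by
  have := dot_tmul U z (U *ᵥ z)
  rw [Matrix.mulVec_mulVec, h, Matrix.one_mulVec] at this
  exact this.symm

/-- spectral theorem over ℝ, without the `RCLike.ofReal`. -/
lemma real_spectral {L : Matrix n n ℝ} (hH : L.IsHermitian) :
    L = (hH.eigenvectorUnitary : Matrix n n ℝ) * Matrix.diagonal hH.eigenvalues *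
      (hH.eigenvectorUnitary : Matrix n n ℝ)ᵀ := by
  have := hH.spectral_theorem
  rwa [Unitary.conjStarAlgAut_apply, star_eq_transpose] at this

/-- decomposition of the matrix exponential of a negative multiple of a PSD matrix. -/
lemma exp_decomp {L : Matrix n n ℝ} (hH : L.IsHermitian) (Δ : ℝ) :
    NormedSpace.exp ((-Δ) • L) =
      (hH.eigenvectorUnitary : Matrix n n ℝ) *
        Matrix.diagonal (fun i => Real.exp (-Δ * hH.eigenvalues i)) *
        (hH.eigenvectorUnitary : Matrix n n ℝ)ᵀ := by
  set U : Matrix n n ℝ := (hH.eigenvectorUnitary : Matrix n n ℝ) with hUdef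
  have hUs : U * Uᵀ = 1 := by
    have := Unitary.coe_mul_star_self hH.eigenvectorUnitary
    rwa [Unitary.coe_star, star_eq_transpose] at this
  have hUnit : IsUnit U := by
    rw [Matrix.isUnit_iff_isUnit_det]
    exact IsUnit.of_mul_eq_one (Uᵀ.det) (by rw [← Matrix.det_mul, hUs, Matrix.det_one])
  have hinv : U⁻¹ = Uᵀ := Matrix.inv_eq_right_inv hUs
  have h1 : (-Δ) • L = U * ((-Δ) • Matrix.diagonal hH.eigenvalues) * U⁻¹ := by
    rw [hinv]
    conv_lhs => rw [real_spectral hH]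
    rw [Matrix.mul_smul, Matrix.smul_mul]
  rw [h1, Matrix.exp_conj U _ hUnit, hinv]
  congr 2
  rw [← Matrix.diagonal_smul, Matrix.exp_diagonal]
  congr 1
  funext i
  rw [Pi.exp_def]
  simp [Real.exp_eq_exp_ℝ]


lemma exp_psd_key {L : Matrix n n ℝ} (hL : L.PosSemidef) {Δ : ℝ} (hΔ : 0 < Δ) (x : n → ℝ) :
    ((NormedSpace.exp ((-Δ) • L) *ᵥ x) ⬝ᵥ (NormedSpace.exp ((-Δ) • L) *ᵥ x) ≤ x ⬝ᵥ x)
    ∧ ((NormedSpace.exp ((-Δ) • L) *ᵥ x) ⬝ᵥ (NormedSpace.exp ((-Δ) • L) *ᵥ x) = x ⬝ᵥ x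
        → L *ᵥ x = 0)
    ∧ (L *ᵥ x = 0 → NormedSpace.exp ((-Δ) • L) *ᵥ x = x) := by
  classical
  have hH := hL.1
  set U : Matrix n n ℝ := (hH.eigenvectorUnitary : Matrix n n ℝ) with hUdef
  set lam : n → ℝ := hH.eigenvalues with hlam
  set e : n → ℝ := fun i => Real.exp (-Δ * lam i) with he
  have hUs : U * Uᵀ = 1 := by
    have := Unitary.coe_mul_star_self hH.eigenvectorUnitary
    rwa [Unitary.coe_star, star_eq_transpose] at this
  have hsU : Uᵀ * U = 1 := by
    have := Unitary.coe_star_mul_self hH.eigenvectorUnitary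
    rwa [star_eq_transpose] at this
  set y : n → ℝ := Uᵀ *ᵥ x with hy
  have hxy : U *ᵥ y = x := by
    rw [hy, Matrix.mulVec_mulVec, hUs, Matrix.one_mulVec]
  have hqy : y ⬝ᵥ y = x ⬝ᵥ x := by
    conv_rhs => rw [← hxy]
    rw [unit_dot hsU]
  have hSx : NormedSpace.exp ((-Δ) • L) *ᵥ x = U *ᵥ (Matrix.diagonal e *ᵥ y) := by
    rw [exp_decomp hH Δ, ← Matrix.mulVec_mulVec, ← Matrix.mulVec_mulVec]
  have hLx : L *ᵥ x = U *ᵥ (Matrix.diagonal lam *ᵥ y) := by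
    conv_lhs => rw [real_spectral hH]
    rw [← Matrix.mulVec_mulVec, ← Matrix.mulVec_mulVec]
  have hqS : (NormedSpace.exp ((-Δ) • L) *ᵥ x) ⬝ᵥ (NormedSpace.exp ((-Δ) • L) *ᵥ x)
      = ∑ i, (e i * y i) * (e i * y i) := by
    rw [hSx, unit_dot hsU]
    simp [dotProduct, Matrix.mulVec_diagonal]
  have hqx : x ⬝ᵥ x = ∑ i, y i * y i := by
    rw [← hqy]; rfl
  have he_pos : ∀ i, 0 < e i := fun i => Real.exp_pos _
  have he_le : ∀ i, e i ≤ 1 := by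
    intro i
    rw [he]
    rw [Real.exp_le_one_iff]
    have := hL.eigenvalues_nonneg i
    nlinarith
  have hterm : ∀ i ∈ Finset.univ, (e i * y i) * (e i * y i) ≤ y i * y i := by
    intro i _
    have h1 : e i * e i ≤ 1 := mul_le_one₀ (he_le i) (he_pos i).le (he_le i)
    nlinarith [mul_self_nonneg (y i)]
  refine ⟨?_, ?_, ?_⟩
  · rw [hqS, hqx]
    exact Finset.sum_le_sum hterm
  · intro heq
    rw [hqS, hqx] at heq
    have hall := (Finset.sum_eq_sum_iff_of_le hterm).mp heq
    have hzero : ∀ i, lam i * y i = 0 := by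
      intro i
      rcases eq_or_ne (lam i) 0 with h0 | h0
      · rw [h0, zero_mul]
      · have hlam_pos : 0 < lam i := lt_of_le_of_ne (hL.eigenvalues_nonneg i) (Ne.symm h0)
        have hlt : e i < 1 := by
          rw [he, Real.exp_lt_one_iff]
          nlinarith
        have heqi := hall i (Finset.mem_univ i)
        have hyi : y i = 0 := by
          by_contra hne
          have hpos : 0 < y i * y i := mul_self_pos.mpr hne
          nlinarith [he_pos i, mul_pos (mul_pos (sub_pos.mpr hlt) (add_pos (he_pos i) one_pos)) hpos]
        rw [hyi, mul_zero]
    rw [hLx]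
    have hd0 : Matrix.diagonal lam *ᵥ y = 0 := by
      funext i
      rw [Matrix.mulVec_diagonal]
      exact hzero i
    rw [hd0, Matrix.mulVec_zero]
  · intro hL0
    rw [hLx] at hL0
    have h2 := congrArg (fun z => Uᵀ *ᵥ z) hL0
    simp only [Matrix.mulVec_mulVec, Matrix.mulVec_zero] at h2
    rw [← mul_assoc, hsU, one_mul] at h2
    have hzero : ∀ i, lam i * y i = 0 := by
      intro i
      have := congrFun h2 i
      rwa [Matrix.mulVec_diagonal] at this
    have hey : Matrix.diagonal e *ᵥ y = y := by
      funext i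
      rw [Matrix.mulVec_diagonal]
      rcases eq_or_ne (lam i) 0 with h0 | h0
      · rw [he]; simp [h0]
      · have hyi : y i = 0 := (mul_eq_zero.mp (hzero i)).resolve_left h0
        rw [hyi, mul_zero]
    rw [hSx, hey, hxy]


lemma prod_fix {l : List (Matrix n n ℝ)} {x : n → ℝ} (h : ∀ S ∈ l, S *ᵥ x = x) :
    l.prod *ᵥ x = x := by
  induction l with
  | nil => simp
  | cons S t ih =>
      rw [List.prod_cons, ← Matrix.mulVec_mulVec,
        ih (fun T hT => h T (List.mem_cons_of_mem _ hT)), h S List.mem_cons_self]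

lemma prod_contract {l : List (Matrix n n ℝ)}
    (h : ∀ S ∈ l, ∀ y : n → ℝ, (S *ᵥ y) ⬝ᵥ (S *ᵥ y) ≤ y ⬝ᵥ y) (x : n → ℝ) :
    (l.prod *ᵥ x) ⬝ᵥ (l.prod *ᵥ x) ≤ x ⬝ᵥ x := by
  induction l with
  | nil => simp
  | cons S t ih =>
      rw [List.prod_cons, ← Matrix.mulVec_mulVec]
      calc (S *ᵥ (t.prod *ᵥ x)) ⬝ᵥ (S *ᵥ (t.prod *ᵥ x)) ≤ (t.prod *ᵥ x) ⬝ᵥ (t.prod *ᵥ x) :=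
            h S List.mem_cons_self _
        _ ≤ x ⬝ᵥ x := ih (fun T hT => h T (List.mem_cons_of_mem _ hT))

lemma prod_rigid {l : List (Matrix n n ℝ)}
    (hc : ∀ S ∈ l, ∀ y : n → ℝ, (S *ᵥ y) ⬝ᵥ (S *ᵥ y) ≤ y ⬝ᵥ y)
    (hr : ∀ S ∈ l, ∀ y : n → ℝ, (S *ᵥ y) ⬝ᵥ (S *ᵥ y) = y ⬝ᵥ y → S *ᵥ y = y)
    {x : n → ℝ} (hx : (l.prod *ᵥ x) ⬝ᵥ (l.prod *ᵥ x) = x ⬝ᵥ x) :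
    ∀ S ∈ l, S *ᵥ x = x := by
  induction l with
  | nil => intro S hS; simp at hS
  | cons S t ih =>
      have hct : ∀ T ∈ t, ∀ y : n → ℝ, (T *ᵥ y) ⬝ᵥ (T *ᵥ y) ≤ y ⬝ᵥ y :=
        fun T hT => hc T (List.mem_cons_of_mem _ hT)
      have hrt : ∀ T ∈ t, ∀ y : n → ℝ, (T *ᵥ y) ⬝ᵥ (T *ᵥ y) = y ⬝ᵥ y → T *ᵥ y = y :=
        fun T hT => hr T (List.mem_cons_of_mem _ hT)
      rw [List.prod_cons, ← Matrix.mulVec_mulVec] at hx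
      have h1 : (S *ᵥ (t.prod *ᵥ x)) ⬝ᵥ (S *ᵥ (t.prod *ᵥ x)) ≤ (t.prod *ᵥ x) ⬝ᵥ (t.prod *ᵥ x) :=
        hc S List.mem_cons_self _
      have h2 : (t.prod *ᵥ x) ⬝ᵥ (t.prod *ᵥ x) ≤ x ⬝ᵥ x := prod_contract hct x
      have heq2 : (t.prod *ᵥ x) ⬝ᵥ (t.prod *ᵥ x) = x ⬝ᵥ x :=
        le_antisymm h2 (by rw [← hx]; exact h1)
      have hfix : ∀ T ∈ t, T *ᵥ x = x := ih hct hrt heq2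
      have hpt : t.prod *ᵥ x = x := prod_fix hfix
      rw [hpt] at hx
      have hSx : S *ᵥ x = x := hr S List.mem_cons_self x hx
      intro T hT
      rcases List.mem_cons.mp hT with rfl | hT'
      · exact hSx
      · exact hfix T hT'

lemma charpoly_conj {P M Q : Matrix n n ℝ} (hPQ : P * Q = 1) :
    (P * M * Q).charpoly = M.charpoly := by
  classical
  unfold Matrix.charpoly
  have hs : ∀ N : Matrix n n (Polynomial ℝ),
      N * Matrix.scalar n (Polynomial.X) = Matrix.scalar n (Polynomial.X) * N := fun N =>
    (Matrix.scalar_commute (Polynomial.X) (fun r' => Commute.all _ _) N).symm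
  have key : Matrix.charmatrix (P * M * Q) =
      P.map Polynomial.C * Matrix.charmatrix M * Q.map Polynomial.C := by
    unfold Matrix.charmatrix
    rw [RingHom.mapMatrix_apply, RingHom.mapMatrix_apply, mul_sub, sub_mul]
    congr 1
    · rw [mul_assoc, ← hs (Q.map Polynomial.C), ← mul_assoc, ← Matrix.map_mul, hPQ,
        Matrix.map_one _ (Polynomial.C_0) (Polynomial.C_1), one_mul]
    · rw [← Matrix.map_mul, ← Matrix.map_mul]
  have h1 : (P.map Polynomial.C) * (Q.map Polynomial.C) = 1 := by
    rw [← Matrix.map_mul, hPQ, Matrix.map_one _ (Polynomial.C_0) (Polynomial.C_1)]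
  have h2 : (P.map Polynomial.C).det * (Q.map Polynomial.C).det = 1 := by
    rw [← Matrix.det_mul, h1, Matrix.det_one]
  rw [key, Matrix.det_mul, Matrix.det_mul]
  calc (P.map Polynomial.C).det * (Matrix.charmatrix M).det * (Q.map Polynomial.C).det
      = (Matrix.charmatrix M).det * ((P.map Polynomial.C).det * (Q.map Polynomial.C).det) := by
        ring
    _ = (Matrix.charmatrix M).det := by rw [h2, mul_one]

lemma charpoly_diagonal (d : n → ℝ) :
    (Matrix.diagonal d).charpoly = ∏ i, (Polynomial.X - Polynomial.C (d i)) := by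
  classical
  unfold Matrix.charpoly
  have : Matrix.charmatrix (Matrix.diagonal d) =
      Matrix.diagonal (fun i => Polynomial.X - Polynomial.C (d i)) := by
    ext i j
    by_cases h : i = j
    · subst h
      rw [Matrix.charmatrix_apply_eq, Matrix.diagonal_apply_eq, Matrix.diagonal_apply_eq]
    · rw [Matrix.charmatrix_apply_ne _ _ _ h, Matrix.diagonal_apply_ne _ h,
        Matrix.diagonal_apply_ne _ h]
      simp
  rw [this, Matrix.det_diagonal]

end Stmt8

/-- Let `L 0, …, L (p-1)` be symmetric positive semidefinite, `Δ j > 0`,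
`Φ = exp(-Δ_{p-1} L_{p-1}) ⋯ exp(-Δ_0 L_0)`, and `m = dim (⋂ⱼ ker Lⱼ)`.  If
`μ 0 ≥ μ 1 ≥ ⋯ ≥ μ (N-1)` lists the eigenvalues of `Φᵀ Φ` in decreasing order with
multiplicity (encoded by the characteristic polynomial factorization), then the first
`m` of them equal `1` and the `(m+1)`-st is strictly less than `1`. -/
theorem eigenvalues_of_transition_product
    (N p m : ℕ)
    (L : Fin p → Matrix (Fin N) (Fin N) ℝ)
    (hL : ∀ j, (L j).PosSemidef)
    (Δ : Fin p → ℝ) (hΔ : ∀ j, 0 < Δ j)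
    (Φ : Matrix (Fin N) (Fin N) ℝ)
    (hΦ : Φ = ((List.ofFn fun j : Fin p => NormedSpace.exp (-(Δ j) • L j)).reverse).prod)
    (hm : Module.finrank ℝ ↥(⨅ j : Fin p, LinearMap.ker (L j).mulVecLin) = m)
    (μ : Fin N → ℝ)
    (hmono : Antitone μ)
    (hμ : (Φᵀ * Φ).charpoly = ∏ i : Fin N, (Polynomial.X - Polynomial.C (μ i))) :
    (∀ i : Fin N, (i : ℕ) < m → μ i = 1) ∧ (∀ i : Fin N, (i : ℕ) = m → μ i < 1) := by
  classical
  set l : List (Matrix (Fin N) (Fin N) ℝ) :=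
    List.ofFn (fun j : Fin p => NormedSpace.exp (-(Δ j) • L j)) with hl
  have hmem : ∀ S ∈ l, ∃ j : Fin p, S = NormedSpace.exp (-(Δ j) • L j) := by
    intro S hS
    rw [hl, List.mem_ofFn] at hS
    obtain ⟨j, hj⟩ := hS
    exact ⟨j, hj.symm⟩
  have hmemj : ∀ j : Fin p, NormedSpace.exp (-(Δ j) • L j) ∈ l.reverse := by
    intro j
    rw [List.mem_reverse, hl, List.mem_ofFn]
    exact ⟨j, rfl⟩
  have hc : ∀ S ∈ l.reverse, ∀ y : Fin N → ℝ, (S *ᵥ y) ⬝ᵥ (S *ᵥ y) ≤ y ⬝ᵥ y := by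
    intro S hS y
    obtain ⟨j, rfl⟩ := hmem S (List.mem_reverse.mp hS)
    exact (Stmt8.exp_psd_key (hL j) (hΔ j) y).1
  have hr : ∀ S ∈ l.reverse, ∀ y : Fin N → ℝ,
      (S *ᵥ y) ⬝ᵥ (S *ᵥ y) = y ⬝ᵥ y → S *ᵥ y = y := by
    intro S hS y hy
    obtain ⟨j, rfl⟩ := hmem S (List.mem_reverse.mp hS)
    exact (Stmt8.exp_psd_key (hL j) (hΔ j) y).2.2
      ((Stmt8.exp_psd_key (hL j) (hΔ j) y).2.1 hy)
  have hΦc : ∀ x : Fin N → ℝ, (Φ *ᵥ x) ⬝ᵥ (Φ *ᵥ x) ≤ x ⬝ᵥ x := by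
    intro x; rw [hΦ]; exact Stmt8.prod_contract hc x
  set A : Matrix (Fin N) (Fin N) ℝ := Φᵀ * Φ with hAdef
  have hAH : A.IsHermitian := by
    have h := Matrix.isHermitian_conjTranspose_mul_self Φ
    have hct : Φᴴ = Φᵀ := by ext i k; simp [Matrix.conjTranspose_apply]
    rwa [hct] at h
  set eigA : Fin N → ℝ := hAH.eigenvalues with heigA
  set UA : Matrix (Fin N) (Fin N) ℝ := (hAH.eigenvectorUnitary : Matrix (Fin N) (Fin N) ℝ)
    with hUA
  have hUs : UA * UAᵀ = 1 := by
    have := Unitary.coe_mul_star_self hAH.eigenvectorUnitary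
    rwa [Unitary.coe_star, Stmt8.star_eq_transpose] at this
  have hsU : UAᵀ * UA = 1 := by
    have := Unitary.coe_star_mul_self hAH.eigenvectorUnitary
    rwa [Stmt8.star_eq_transpose] at this
  have hdetU : IsUnit UA.det :=
    IsUnit.of_mul_eq_one UAᵀ.det (by rw [← Matrix.det_mul, hUs, Matrix.det_one])
  have hdetUT : IsUnit UAᵀ.det :=
    IsUnit.of_mul_eq_one UA.det (by rw [← Matrix.det_mul, hsU, Matrix.det_one])
  have hspecA : A = UA * Matrix.diagonal eigA * UAᵀ := Stmt8.real_spectral hAH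
  -- characteristic polynomial of A via eigenvalues
  have hchar : A.charpoly = ∏ i, (Polynomial.X - Polynomial.C (eigA i)) := by
    conv_lhs => rw [hspecA]
    rw [Stmt8.charpoly_conj hUs, Stmt8.charpoly_diagonal]
  have hroots : ∀ f : Fin N → ℝ,
      (∏ i, (Polynomial.X - Polynomial.C (f i))).roots = Multiset.map f Finset.univ.val := by
    intro f
    have hmm : Multiset.map (fun i => Polynomial.X - Polynomial.C (f i)) Finset.univ.val
        = Multiset.map (fun a => Polynomial.X - Polynomial.C a) (Multiset.map f Finset.univ.val) := by
      rw [Multiset.map_map]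
      rfl
    rw [Finset.prod_eq_multiset_prod, hmm, Polynomial.roots_multiset_prod_X_sub_C]
  have hms : Multiset.map μ Finset.univ.val = Multiset.map eigA Finset.univ.val := by
    rw [← hroots μ, ← hroots eigA, ← hμ, ← hchar]
  -- each eigenvalue of A is at most 1
  have heig_le : ∀ i : Fin N, eigA i ≤ 1 := by
    intro i
    have hAU : A * UA = UA * Matrix.diagonal eigA := by
      conv_lhs => rw [hspecA]
      rw [Matrix.mul_assoc, hsU, Matrix.mul_one]
    set v : Fin N → ℝ := fun k => UA k i with hv
    have hv1 : v ⬝ᵥ v = 1 := by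
      have h := congrFun (congrFun hsU i) i
      simpa [Matrix.mul_apply, Matrix.one_apply, dotProduct, Matrix.transpose_apply,
        hv] using h
    have hev : A *ᵥ v = eigA i • v := by
      funext k
      have h := congrFun (congrFun hAU k) i
      rw [Matrix.mul_diagonal] at h
      simpa [Matrix.mulVec, dotProduct, Matrix.mul_apply, hv, mul_comm] using h
    have hq1 : v ⬝ᵥ (A *ᵥ v) = eigA i := by
      rw [hev, dotProduct_smul, hv1]
      simp
    have hq2 : v ⬝ᵥ (A *ᵥ v) = (Φ *ᵥ v) ⬝ᵥ (Φ *ᵥ v) := by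
      rw [hAdef, ← Matrix.mulVec_mulVec]
      exact Stmt8.dot_tmul Φ v (Φ *ᵥ v)
    have h3 := hΦc v
    rw [← hq2, hq1, hv1] at h3
    exact h3
  -- kernel identification
  have hker : LinearMap.ker ((1 : Matrix (Fin N) (Fin N) ℝ) - A).mulVecLin
      = ⨅ j : Fin p, LinearMap.ker (L j).mulVecLin := by
    ext x
    simp only [LinearMap.mem_ker, Matrix.mulVecLin_apply, Submodule.mem_iInf]
    rw [Matrix.sub_mulVec, Matrix.one_mulVec, sub_eq_zero]
    constructor
    · intro hx j
      have hAx : A *ᵥ x = x := hx.symm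
      have hq : (Φ *ᵥ x) ⬝ᵥ (Φ *ᵥ x) = x ⬝ᵥ x := by
        have h1 := Stmt8.dot_tmul Φ x (Φ *ᵥ x)
        rw [Matrix.mulVec_mulVec] at h1
        rw [← h1, ← hAdef, hAx]
      rw [hΦ] at hq
      have hfix := Stmt8.prod_rigid hc hr hq
      have hSj := hfix _ (hmemj j)
      have hq2 : (NormedSpace.exp (-(Δ j) • L j) *ᵥ x) ⬝ᵥ
          (NormedSpace.exp (-(Δ j) • L j) *ᵥ x) = x ⬝ᵥ x := by rw [hSj]
      exact (Stmt8.exp_psd_key (hL j) (hΔ j) x).2.1 hq2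
    · intro hx
      have hfix : ∀ S ∈ l.reverse, S *ᵥ x = x := by
        intro S hS
        obtain ⟨j, rfl⟩ := hmem S (List.mem_reverse.mp hS)
        exact (Stmt8.exp_psd_key (hL j) (hΔ j) x).2.2 (hx j)
      have hΦx : Φ *ᵥ x = x := by rw [hΦ]; exact Stmt8.prod_fix hfix
      have hΦTx : Φᵀ *ᵥ x = x := by
        rw [hΦ, Matrix.transpose_list_prod]
        apply Stmt8.prod_fix
        intro T hT
        rw [List.mem_reverse, List.mem_map] at hT
        obtain ⟨S, hS, rfl⟩ := hT
        obtain ⟨j, rfl⟩ := hmem S (List.mem_reverse.mp hS)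
        have hsym : (NormedSpace.exp (-(Δ j) • L j))ᵀ = NormedSpace.exp (-(Δ j) • L j) := by
          rw [← Matrix.exp_transpose]
          congr 1
          rw [Matrix.transpose_smul, Stmt8.herm_transpose (hL j).1]
        rw [hsym]
        exact (Stmt8.exp_psd_key (hL j) (hΔ j) x).2.2 (hx j)
      rw [hAdef, ← Matrix.mulVec_mulVec, hΦx, hΦTx]
  -- rank computation
  have hBdec : (1 : Matrix (Fin N) (Fin N) ℝ) - A
      = UA * Matrix.diagonal (fun i => 1 - eigA i) * UAᵀ := by
    have hd : Matrix.diagonal (fun i => 1 - eigA i)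
        = 1 - Matrix.diagonal eigA := by
      rw [← Matrix.diagonal_one, ← Matrix.diagonal_sub]
    rw [hd, Matrix.mul_sub, Matrix.mul_one, Matrix.sub_mul, hUs, ← hspecA]
  have hrank : ((1 : Matrix (Fin N) (Fin N) ℝ) - A).rank
      = Fintype.card {i : Fin N // eigA i ≠ 1} := by
    rw [hBdec, Matrix.rank_mul_eq_left_of_isUnit_det UAᵀ _ hdetUT,
      Matrix.rank_mul_eq_right_of_isUnit_det UA _ hdetU, Matrix.rank_diagonal]
    apply Fintype.card_congr
    apply Equiv.subtypeEquivRight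
    intro i
    rw [sub_ne_zero]
    exact ⟨fun h => h.symm, fun h => h.symm⟩
  have hrn : ((1 : Matrix (Fin N) (Fin N) ℝ) - A).rank + m = N := by
    have h := LinearMap.finrank_range_add_finrank_ker
      ((1 : Matrix (Fin N) (Fin N) ℝ) - A).mulVecLin
    rw [hker, hm] at h
    rw [Matrix.rank]
    rw [h]
    simp [Module.finrank_pi]
  have hcard1 : Fintype.card {i : Fin N // eigA i = 1}
      + Fintype.card {i : Fin N // eigA i ≠ 1} = N := by
    rw [Fintype.card_subtype, Fintype.card_subtype]
    have h := Finset.card_filter_add_card_filter_not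
      (s := (Finset.univ : Finset (Fin N))) (p := fun i => eigA i = 1)
    simpa using h
  have hcnt : ∀ f : Fin N → ℝ, Multiset.count 1 (Multiset.map f Finset.univ.val)
      = (Finset.univ.filter fun i => f i = 1).card := by
    intro f
    rw [Multiset.count_map]
    have h1 : (Finset.univ.filter fun i => f i = 1).card
        = Multiset.card (Multiset.filter (fun i => f i = 1) Finset.univ.val) := rfl
    rw [h1]
    congr 1
    apply Multiset.filter_congr
    intro x _
    exact eq_comm
  have hcount : (Finset.univ.filter fun i : Fin N => μ i = 1).card = m := by
    have h1 := hcnt μ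
    have h2 := hcnt eigA
    rw [hms, h2] at h1
    have h3 : Fintype.card {i : Fin N // eigA i = 1}
        = (Finset.univ.filter fun i => eigA i = 1).card := Fintype.card_subtype _
    rw [← h1, ← h3]
    omega
  have hle1 : ∀ i : Fin N, μ i ≤ 1 := by
    intro i
    have hmemi : μ i ∈ Multiset.map eigA Finset.univ.val := by
      rw [← hms]
      exact Multiset.mem_map.mpr ⟨i, Finset.mem_univ i, rfl⟩
    obtain ⟨j, _, hj⟩ := Multiset.mem_map.mp hmemi
    rw [← hj]
    exact heig_le j
  constructor
  · intro i hi
    by_contra hne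
    have hlt : μ i < 1 := lt_of_le_of_ne (hle1 i) hne
    have hsub : (Finset.univ.filter fun j : Fin N => μ j = 1) ⊆ Finset.Iio i := by
      intro j hj
      rw [Finset.mem_filter] at hj
      rw [Finset.mem_Iio]
      by_contra hge
      push_neg at hge
      have h := hmono hge
      rw [hj.2] at h
      linarith
    have h := Finset.card_le_card hsub
    rw [hcount, Fin.card_Iio] at h
    omega
  · intro i hi
    refine lt_of_le_of_ne (hle1 i) ?_
    intro heq1
    have hsub : Finset.Iic i ⊆ (Finset.univ.filter fun j : Fin N => μ j = 1) := by
      intro j hj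
      rw [Finset.mem_Iic] at hj
      rw [Finset.mem_filter]
      refine ⟨Finset.mem_univ j, le_antisymm (hle1 j) ?_⟩
      have h := hmono hj
      rw [heq1] at h
      linarith
    have h := Finset.card_le_card hsub
    rw [hcount, Fin.card_Iic] at h
    omega
end

section
/- Consider N = dn and the switched system ẋ(t) = −L(t)x(t) with L : [0,∞) → ℝ^{dn×dn} piecewise constant, all values symmetric positive semidefinite. Suppose there is a subsequence of switching times t_{k_0} = t_0 < t_{k_1} < ⋯ with bounded gaps and q ∈ (0,1) such that for every l: the null space of the integral-network Laplacian over [t_{k_l}, t_{k_{l+1}}) equals the column space of C(1_n ⊗ Ψ), where Ψ = [φ_1, …, φ_m] ∈ ℝ^{d×m} has orthonormal columns, C = diag(σ_1 I_d, …, σ_n I_d) with each σ_i ∈ {+1, −1}; and the (m+1)-th largest eigenvalue of Φ(t_{k_{l+1}}, t_{k_l})^⊤ Φ(t_{k_{l+1}}, t_{k_l}) is at most q. Then every solution converges and lim_{t→∞} x(t) = C (1_n ⊗ ((1/n) Ψ (1_n^⊤ ⊗ Ψ^⊤) C x(t_0))). -/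
open Matrix Filter Kronecker
open Polynomial

variable {ι : Type*} [Fintype ι] [DecidableEq ι]




/-- If `u` is an eigenvector of `M` with eigenvalue `c`, then `exp M *ᵥ u = exp c • u`. -/
lemma aux_exp_mulVec_eig (M : Matrix ι ι ℝ) (u : ι → ℝ) (c : ℝ)
    (hMu : M *ᵥ u = c • u) : NormedSpace.exp M *ᵥ u = Real.exp c • u := by
  letI : SeminormedRing (Matrix ι ι ℝ) := Matrix.linftyOpSemiNormedRing
  letI : NormedRing (Matrix ι ι ℝ) := Matrix.linftyOpNormedRing
  letI : NormedAlgebra ℝ (Matrix ι ι ℝ) := Matrix.linftyOpNormedAlgebra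
  have hpow : ∀ j : ℕ, M ^ j *ᵥ u = c ^ j • u := by
    intro j
    induction j with
    | zero => simp
    | succ j ih =>
      rw [pow_succ, ← Matrix.mulVec_mulVec, hMu, Matrix.mulVec_smul, ih, smul_smul,
        pow_succ, mul_comm]
  let φ : Matrix ι ι ℝ →ₗ[ℝ] (ι → ℝ) :=
    { toFun := fun A => A *ᵥ u
      map_add' := fun A B => Matrix.add_mulVec A B u
      map_smul' := fun r A => Matrix.smul_mulVec r A u }
  have hφc : Continuous φ := φ.continuous_of_finiteDimensional
  have hsum : Summable fun j : ℕ => (((Nat.factorial j : ℝ))⁻¹) • M ^ j :=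
    NormedSpace.expSeries_summable' (𝕂 := ℝ) M
  have h1 : NormedSpace.exp M *ᵥ u = ∑' j : ℕ, (((Nat.factorial j : ℝ))⁻¹) • (M ^ j *ᵥ u) := by
    rw [NormedSpace.exp_eq_tsum ℝ]
    have h2 := (hsum.hasSum.map φ hφc).tsum_eq
    simp only [φ, LinearMap.coe_mk, AddHom.coe_mk, Function.comp] at h2
    rw [← h2]
    exact tsum_congr fun j => Matrix.smul_mulVec _ _ _
  rw [h1]
  have h3 : ∀ j : ℕ, (((Nat.factorial j : ℝ))⁻¹) • (M ^ j *ᵥ u) = ((((Nat.factorial j : ℝ))⁻¹) * c ^ j) • u := by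
    intro j; rw [hpow j, smul_smul]
  simp only [h3]
  have hsc : Summable fun j : ℕ => (((Nat.factorial j : ℝ))⁻¹) * c ^ j := by
    simpa [smul_eq_mul] using NormedSpace.expSeries_summable' (𝕂 := ℝ) (𝔸 := ℝ) c
  rw [hsc.tsum_smul_const]
  congr 1
  rw [Real.exp_eq_exp_ℝ, NormedSpace.exp_eq_tsum ℝ]
  simp [smul_eq_mul]

/-- A product of matrices each fixing `u` fixes `u`. -/
lemma aux_list_prod_fix (ls : List (Matrix ι ι ℝ)) (u : ι → ℝ)
    (hfix : ∀ A ∈ ls, A *ᵥ u = u) : ls.prod *ᵥ u = u := by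
  induction ls with
  | nil => simp
  | cons A ls ih =>
    rw [List.prod_cons, ← Matrix.mulVec_mulVec, ih (fun B hB => hfix B (.tail _ hB)),
      hfix A (.head _)]



lemma aux_charmatrix_eq (M : Matrix ι ι ℝ) :
    charmatrix M = Matrix.diagonal (fun _ : ι => (X : ℝ[X])) - M.map Polynomial.C := by
  ext i j
  by_cases hij : i = j
  · subst hij; simp [charmatrix_apply_eq]
  · simp [charmatrix_apply_ne _ _ _ hij, Matrix.diagonal_apply_ne _ hij]

lemma aux_charpoly_similar (P A Q : Matrix ι ι ℝ)
    (hPQ : P * Q = 1) : (P * A * Q).charpoly = A.charpoly := by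
  have hQP : Q * P = 1 := mul_eq_one_comm.mp hPQ
  have hmap : ∀ (M N : Matrix ι ι ℝ),
      (M * N).map (Polynomial.C (R := ℝ)) = M.map Polynomial.C * N.map Polynomial.C := by
    intro M N
    exact Matrix.map_mul
  have key : charmatrix (P * A * Q)
      = P.map Polynomial.C * charmatrix A * Q.map Polynomial.C := by
    rw [aux_charmatrix_eq, aux_charmatrix_eq, Matrix.mul_sub, Matrix.sub_mul]
    congr 1
    · -- diagonal X = P * diagonal X * Q
      have hd : Matrix.diagonal (fun _ : ι => (X : ℝ[X])) = (X : ℝ[X]) • (1 : Matrix ι ι ℝ[X]) := by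
        rw [Matrix.smul_one_eq_diagonal]
      rw [hd, Matrix.mul_smul, Matrix.mul_one, Matrix.smul_mul, ← hmap, hPQ]
      simp
    · rw [Matrix.mul_assoc, ← hmap, ← hmap, Matrix.mul_assoc]
  unfold Matrix.charpoly
  rw [key, Matrix.det_mul, Matrix.det_mul]
  have hdet : (P.map (Polynomial.C (R := ℝ))).det * (Q.map Polynomial.C).det = 1 := by
    rw [← Matrix.det_mul, ← hmap, hPQ]
    simp
  calc (P.map Polynomial.C).det * (charmatrix A).det * (Q.map Polynomial.C).det
      = (P.map Polynomial.C).det * (Q.map Polynomial.C).det * (charmatrix A).det := by ring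
    _ = (charmatrix A).det := by rw [hdet, one_mul]

lemma aux_charpoly_diagonal (v : ι → ℝ) :
    (Matrix.diagonal v).charpoly = ∏ i : ι, (X - Polynomial.C (v i)) := by
  unfold Matrix.charpoly
  have : charmatrix (Matrix.diagonal v) = Matrix.diagonal (fun i => (X : ℝ[X]) - Polynomial.C (v i)) := by
    ext i j
    by_cases hij : i = j
    · subst hij; simp [charmatrix_apply_eq]
    · simp [charmatrix_apply_ne _ _ _ hij, Matrix.diagonal_apply_ne _ hij]
  rw [this, Matrix.det_diagonal]

/-- charpoly of a real symmetric matrix is the product over its eigenvalues. -/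
lemma aux_charpoly_hermitian (A : Matrix ι ι ℝ) (hA : A.IsHermitian) :
    A.charpoly = ∏ i : ι, (X - Polynomial.C (hA.eigenvalues i)) := by
  have hspec := hA.spectral_theorem
  rw [Unitary.conjStarAlgAut_apply] at hspec
  set U : Matrix ι ι ℝ := (hA.eigenvectorUnitary : Matrix ι ι ℝ) with hU
  have hUQ : U * (star U) = 1 := (Matrix.mem_unitaryGroup_iff).mp hA.eigenvectorUnitary.2
  have hdiag : Matrix.diagonal (RCLike.ofReal ∘ hA.eigenvalues)
      = Matrix.diagonal hA.eigenvalues := by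
    congr 1
  calc A.charpoly = (U * Matrix.diagonal hA.eigenvalues * star U).charpoly := by
        rw [← hdiag, ← hspec]
    _ = (Matrix.diagonal hA.eigenvalues).charpoly := aux_charpoly_similar _ _ _ hUQ
    _ = _ := aux_charpoly_diagonal _
lemma aux_herm_eigen_decomp (A : Matrix ι ι ℝ) (hA : A.IsHermitian) :
    ∃ u : ι → (ι → ℝ),
      (∀ i, A *ᵥ u i = hA.eigenvalues i • u i) ∧
      (∀ x : ι → ℝ, x = ∑ i, (u i ⬝ᵥ x) • u i) := by
  let b := hA.eigenvectorBasis
  refine ⟨fun i => ⇑(b i), fun i => hA.mulVec_eigenvectorBasis i, ?_⟩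
  intro x
  have hrepr : ∀ i, b.repr (WithLp.toLp 2 x) i = (⇑(b i) : ι → ℝ) ⬝ᵥ x := by
    intro i
    rw [b.repr_apply_apply]
    simp [PiLp.inner_apply, RCLike.inner_apply, dotProduct, mul_comm]
  have h := congrArg WithLp.ofLp (b.sum_repr (WithLp.toLp 2 x)).symm
  simp only [hrepr, WithLp.ofLp_sum, WithLp.ofLp_smul] at h
  exact h

lemma aux_dot_parseval (u : ι → (ι → ℝ)) (hexp : ∀ x : ι → ℝ, x = ∑ i, (u i ⬝ᵥ x) • u i)
    (x y : ι → ℝ) : x ⬝ᵥ y = ∑ i, (u i ⬝ᵥ x) * (u i ⬝ᵥ y) := by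
  conv_lhs => rw [hexp x]
  simp only [dotProduct, Finset.sum_apply, Pi.smul_apply, smul_eq_mul, Finset.sum_mul]
  rw [Finset.sum_comm]
  refine Finset.sum_congr rfl fun i _ => ?_
  rw [Finset.sum_comm]
  refine Finset.sum_congr rfl fun j _ => ?_
  rw [Finset.mul_sum]
  exact Finset.sum_congr rfl fun kk _ => by ring

lemma aux_card_filter {κ : Type*} [Fintype κ] (f : κ → ℝ) (q : ℝ) :
    (Finset.univ.filter fun i : κ => q < f i).card
      = Multiset.countP (fun a => q < a) (Finset.univ.val.map f) := by
  rw [Multiset.countP_map]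
  rfl

lemma aux_eig_count (S : Matrix ι ι ℝ) (hS : S.IsHermitian) (q : ℝ) (m nd : ℕ)
    (μ : Fin nd → ℝ) (hanti : Antitone μ)
    (hcp : S.charpoly = ∏ j : Fin nd, (X - Polynomial.C (μ j)))
    (hμm : ∀ j : Fin nd, (j : ℕ) = m → μ j ≤ q) :
    (Finset.univ.filter fun i : ι => q < hS.eigenvalues i).card ≤ m := by
  classical
  have h1 : (Finset.univ.val.map hS.eigenvalues)
      = (Finset.univ.val.map μ) := by
    have e1 : ((Finset.univ.val.map hS.eigenvalues).map fun a => (X : ℝ[X]) - Polynomial.C a).prod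
        = ((Finset.univ.val.map μ).map fun a => (X : ℝ[X]) - Polynomial.C a).prod := by
      rw [Multiset.map_map, Multiset.map_map]
      have := aux_charpoly_hermitian S hS
      calc (Finset.univ.val.map fun i => (X : ℝ[X]) - Polynomial.C (hS.eigenvalues i)).prod
          = ∏ i : ι, ((X : ℝ[X]) - Polynomial.C (hS.eigenvalues i)) := rfl
        _ = S.charpoly := this.symm
        _ = ∏ j : Fin nd, ((X : ℝ[X]) - Polynomial.C (μ j)) := hcp
        _ = _ := rfl
    calc Finset.univ.val.map hS.eigenvalues
        = ((Finset.univ.val.map hS.eigenvalues).map fun a => (X : ℝ[X]) - Polynomial.C a).prod.roots :=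
          (Polynomial.roots_multiset_prod_X_sub_C _).symm
      _ = ((Finset.univ.val.map μ).map fun a => (X : ℝ[X]) - Polynomial.C a).prod.roots := by rw [e1]
      _ = Finset.univ.val.map μ := Polynomial.roots_multiset_prod_X_sub_C _
  have h2 : (Finset.univ.filter fun i : ι => q < hS.eigenvalues i).card
      = (Finset.univ.filter fun j : Fin nd => q < μ j).card := by
    rw [aux_card_filter, aux_card_filter, h1]
  rw [h2]
  have h3 : ∀ j ∈ (Finset.univ.filter fun j : Fin nd => q < μ j), (j : ℕ) < m := by
    intro j hj
    rw [Finset.mem_filter] at hj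
    by_contra hge
    push_neg at hge
    have hmnd : m < nd := lt_of_le_of_lt hge j.2
    have : μ j ≤ μ ⟨m, hmnd⟩ := hanti (by exact hge)
    exact lt_irrefl _ (lt_of_lt_of_le hj.2 (le_trans this (hμm ⟨m, hmnd⟩ rfl)))
  calc (Finset.univ.filter fun j : Fin nd => q < μ j).card
      ≤ (Finset.range m).card := by
        apply Finset.card_le_card_of_injOn (fun j : Fin nd => (j : ℕ))
        · intro j hj; exact Finset.mem_range.mpr (h3 j hj)
        · intro a _ b _ hab; exact Fin.ext hab
    _ = m := Finset.card_range m
lemma aux_quadratic_bound (S : Matrix ι ι ℝ) (hS : S.IsHermitian)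
    (q : ℝ) (hq1 : q < 1) (m : ℕ)
    (V : Submodule ℝ (ι → ℝ)) (hVrank : Module.finrank ℝ V = m)
    (hSV : ∀ v ∈ V, S *ᵥ v = v)
    (hcount : (Finset.univ.filter fun i : ι => q < hS.eigenvalues i).card ≤ m) :
    ∀ e : ι → ℝ, (∀ v ∈ V, v ⬝ᵥ e = 0) → e ⬝ᵥ (S *ᵥ e) ≤ q * (e ⬝ᵥ e) := by
  classical
  obtain ⟨u, heig, hexp⟩ := aux_herm_eigen_decomp S hS
  set lam := hS.eigenvalues with hlam
  have hSsymm : Sᵀ = S := by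
    rw [← Matrix.conjTranspose_eq_transpose_of_trivial]; exact hS.eq
  set F1 : Finset ι := Finset.univ.filter fun i => lam i = 1 with hF1
  set Fq : Finset ι := Finset.univ.filter fun i => q < lam i with hFq
  have hF1q : F1 ⊆ Fq := by
    intro i hi
    simp only [hF1, hFq, Finset.mem_filter, Finset.mem_univ, true_and] at hi ⊢
    rw [hi]; exact hq1
  have hdotS : ∀ (i : ι) (z : ι → ℝ), u i ⬝ᵥ (S *ᵥ z) = lam i * (u i ⬝ᵥ z) := by
    intro i z
    calc u i ⬝ᵥ (S *ᵥ z) = (u i ᵥ* S) ⬝ᵥ z := Matrix.dotProduct_mulVec _ _ _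
      _ = (Sᵀ *ᵥ u i) ⬝ᵥ z := by rw [Matrix.mulVec_transpose]
      _ = (S *ᵥ u i) ⬝ᵥ z := by rw [hSsymm]
      _ = (lam i • u i) ⬝ᵥ z := by rw [heig]
      _ = lam i * (u i ⬝ᵥ z) := by rw [smul_dotProduct, smul_eq_mul]
  have hVle : V ≤ Submodule.span ℝ (u '' (F1 : Set ι)) := by
    intro v hv
    have hSv := hSV v hv
    have hco : ∀ i, i ∉ F1 → u i ⬝ᵥ v = 0 := by
      intro i hi
      have h1 : lam i * (u i ⬝ᵥ v) = u i ⬝ᵥ v := by rw [← hdotS i v, hSv]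
      have h2 : (lam i - 1) * (u i ⬝ᵥ v) = 0 := by ring_nf; linarith
      rcases mul_eq_zero.mp h2 with h | h
      · exact absurd (by linarith : lam i = 1)
          (by simpa [hF1, Finset.mem_filter] using hi)
      · exact h
    have hsum : ∑ i, (u i ⬝ᵥ v) • u i = ∑ i ∈ F1, (u i ⬝ᵥ v) • u i :=
      (Finset.sum_subset (Finset.subset_univ F1)
        (fun i _ hi => by rw [hco i hi, zero_smul])).symm
    rw [show v = ∑ i, (u i ⬝ᵥ v) • u i from hexp v, hsum]
    exact Submodule.sum_mem _ fun i hi =>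
      Submodule.smul_mem _ _ (Submodule.subset_span ⟨i, by simpa using hi, rfl⟩)
  have hWle : Module.finrank ℝ (Submodule.span ℝ (u '' (F1 : Set ι))) ≤ F1.card := by
    have h1 : (↑(F1.image u) : Set (ι → ℝ)) = u '' (F1 : Set ι) := Finset.coe_image
    calc Module.finrank ℝ (Submodule.span ℝ (u '' (F1 : Set ι)))
        = Module.finrank ℝ (Submodule.span ℝ (↑(F1.image u) : Set (ι → ℝ))) := by rw [h1]
      _ ≤ (F1.image u).card := finrank_span_finset_le_card _
      _ ≤ F1.card := Finset.card_image_le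
  have hmle : m ≤ F1.card := by
    calc m = Module.finrank ℝ V := hVrank.symm
      _ ≤ Module.finrank ℝ (Submodule.span ℝ (u '' (F1 : Set ι))) :=
          Submodule.finrank_mono hVle
      _ ≤ F1.card := hWle
  have hcardeq : F1 = Fq := by
    apply Finset.eq_of_subset_of_card_le hF1q
    calc Fq.card ≤ m := hcount
      _ ≤ F1.card := hmle
  have hF1m : F1.card ≤ m := le_trans (Finset.card_le_card hF1q) hcount
  have hVeq : V = Submodule.span ℝ (u '' (F1 : Set ι)) := by
    apply Submodule.eq_of_le_of_finrank_le hVle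
    calc Module.finrank ℝ (Submodule.span ℝ (u '' (F1 : Set ι)))
        ≤ F1.card := hWle
      _ ≤ m := hF1m
      _ = Module.finrank ℝ V := hVrank.symm
  have huV : ∀ i ∈ Fq, u i ∈ V := by
    intro i hi
    rw [hVeq]
    exact Submodule.subset_span ⟨i, by simpa [← hcardeq] using hi, rfl⟩
  intro e he
  have hce : ∀ i ∈ Fq, u i ⬝ᵥ e = 0 := fun i hi => he (u i) (huV i hi)
  calc e ⬝ᵥ (S *ᵥ e) = ∑ i, (u i ⬝ᵥ e) * (u i ⬝ᵥ (S *ᵥ e)) :=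
        aux_dot_parseval u hexp e (S *ᵥ e)
    _ = ∑ i, lam i * ((u i ⬝ᵥ e) * (u i ⬝ᵥ e)) := by
        refine Finset.sum_congr rfl fun i _ => ?_
        rw [hdotS i e]; ring
    _ ≤ ∑ i, q * ((u i ⬝ᵥ e) * (u i ⬝ᵥ e)) := by
        refine Finset.sum_le_sum fun i _ => ?_
        by_cases hi : i ∈ Fq
        · rw [hce i hi]; simp
        · have hle : lam i ≤ q := by
            simp only [hFq, Finset.mem_filter, Finset.mem_univ, true_and, not_lt] at hi
            exact hi
          exact mul_le_mul_of_nonneg_right hle (mul_self_nonneg _)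
    _ = q * ∑ i, (u i ⬝ᵥ e) * (u i ⬝ᵥ e) := by rw [Finset.mul_sum]
    _ = q * (e ⬝ᵥ e) := by rw [← aux_dot_parseval u hexp e e]
lemma aux_cover (k : ℕ → ℕ) (hk0 : k 0 = 0) (hk : StrictMono k) (j : ℕ) :
    ∃ l, k l ≤ j ∧ j < k (l + 1) := by
  have hex : ∃ l, j < k l :=
    ⟨j + 1, lt_of_lt_of_le (Nat.lt_succ_self j) (hk.le_apply)⟩
  have hl0 : j < k (Nat.find hex) := Nat.find_spec hex
  have hl0ne : Nat.find hex ≠ 0 := by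
    intro h; rw [h, hk0] at hl0; omega
  obtain ⟨l, hl⟩ := Nat.exists_eq_succ_of_ne_zero hl0ne
  refine ⟨l, ?_, by rw [← Nat.succ_eq_add_one, ← hl]; exact hl0⟩
  have := Nat.find_min hex (show l < Nat.find hex by omega)
  omega

lemma aux_prod_step (A : ℕ → Matrix ι ι ℝ) (y : ℕ → ι → ℝ) (a : ℕ)
    (hstep : ∀ j, y (j + 1) = A j *ᵥ y j) (c : ℕ) :
    ((List.ofFn fun i : Fin c => A (a + (i : ℕ))).reverse).prod *ᵥ y a = y (a + c) := by
  induction c with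
  | zero => simp
  | succ c ih =>
    rw [List.ofFn_succ']
    simp only [List.concat_eq_append, List.reverse_append, List.reverse_cons, List.reverse_nil,
      List.nil_append, List.singleton_append, List.prod_cons, Fin.val_last, Fin.coe_castSucc]
    rw [← Matrix.mulVec_mulVec, ih, ← hstep (a + c)]
    ring_nf

lemma aux_exp_contract (M : Matrix ι ι ℝ) (hM : M.PosSemidef) (c : ℝ) (hc : c ≤ 0) (z : ι → ℝ) :
    (NormedSpace.exp (c • M) *ᵥ z) ⬝ᵥ (NormedSpace.exp (c • M) *ᵥ z) ≤ z ⬝ᵥ z := by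
  obtain ⟨u, heig, hexp⟩ := aux_herm_eigen_decomp M hM.1
  set lam := hM.1.eigenvalues with hlam
  set A := NormedSpace.exp (c • M) with hA
  have hAu : ∀ i, A *ᵥ u i = Real.exp (c * lam i) • u i := by
    intro i
    apply aux_exp_mulVec_eig
    rw [Matrix.smul_mulVec, heig, smul_smul]
  have hMsymm : Mᵀ = M := by
    rw [← Matrix.conjTranspose_eq_transpose_of_trivial]; exact hM.1.eq
  have hAsymm : Aᵀ = A := by
    rw [hA, ← Matrix.exp_transpose, Matrix.transpose_smul, hMsymm]
  have hdotA : ∀ (i : ι) (zz : ι → ℝ),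
      u i ⬝ᵥ (A *ᵥ zz) = Real.exp (c * lam i) * (u i ⬝ᵥ zz) := by
    intro i zz
    calc u i ⬝ᵥ (A *ᵥ zz) = (u i ᵥ* A) ⬝ᵥ zz := Matrix.dotProduct_mulVec _ _ _
      _ = (Aᵀ *ᵥ u i) ⬝ᵥ zz := by rw [Matrix.mulVec_transpose]
      _ = (A *ᵥ u i) ⬝ᵥ zz := by rw [hAsymm]
      _ = (Real.exp (c * lam i) • u i) ⬝ᵥ zz := by rw [hAu]
      _ = _ := by rw [smul_dotProduct, smul_eq_mul]
  calc (A *ᵥ z) ⬝ᵥ (A *ᵥ z) = ∑ i, (u i ⬝ᵥ (A *ᵥ z)) * (u i ⬝ᵥ (A *ᵥ z)) :=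
        aux_dot_parseval u hexp _ _
    _ ≤ ∑ i, (u i ⬝ᵥ z) * (u i ⬝ᵥ z) := by
        refine Finset.sum_le_sum fun i _ => ?_
        rw [hdotA]
        have h1 : Real.exp (c * lam i) ≤ 1 := by
          rw [Real.exp_le_one_iff]
          exact mul_nonpos_of_nonpos_of_nonneg hc (hM.eigenvalues_nonneg i)
        have h2 : (0:ℝ) ≤ Real.exp (c * lam i) := (Real.exp_pos _).le
        have h3 : (0:ℝ) ≤ (u i ⬝ᵥ z) * (u i ⬝ᵥ z) := mul_self_nonneg _
        calc Real.exp (c * lam i) * (u i ⬝ᵥ z) * (Real.exp (c * lam i) * (u i ⬝ᵥ z))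
            = (Real.exp (c * lam i) * Real.exp (c * lam i)) * ((u i ⬝ᵥ z) * (u i ⬝ᵥ z)) := by ring
          _ ≤ 1 * ((u i ⬝ᵥ z) * (u i ⬝ᵥ z)) := by
              apply mul_le_mul_of_nonneg_right _ h3
              calc Real.exp (c * lam i) * Real.exp (c * lam i) ≤ 1 * 1 :=
                    mul_le_mul h1 h1 h2 zero_le_one
                _ = 1 := mul_one 1
          _ = _ := one_mul _
    _ = z ⬝ᵥ z := (aux_dot_parseval u hexp _ _).symm
lemma aux_list_prod_transpose_fix (ls : List (Matrix ι ι ℝ)) (w : ι → ℝ)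
    (hsymm : ∀ A ∈ ls, Aᵀ = A) (hfix : ∀ A ∈ ls, A *ᵥ w = w) :
    (ls.prod)ᵀ *ᵥ w = w := by
  rw [Matrix.transpose_list_prod]
  apply aux_list_prod_fix
  intro A hA
  rw [List.mem_reverse, List.mem_map] at hA
  obtain ⟨B, hB, rfl⟩ := hA
  rw [hsymm B hB]; exact hfix B hB

lemma aux_sum_mulVec {κ : Type*} (s : Finset κ) (M : κ → Matrix ι ι ℝ) (vv : ι → ℝ) :
    (∑ i ∈ s, M i) *ᵥ vv = ∑ i ∈ s, M i *ᵥ vv := by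
  classical
  induction s using Finset.induction with
  | empty => simp
  | insert _ _ h ih => rw [Finset.sum_insert h, Finset.sum_insert h, Matrix.add_mulVec, ih]

lemma aux_dot_sum {κ : Type*} (s : Finset κ) (w : κ → (ι → ℝ)) (vv : ι → ℝ) :
    vv ⬝ᵥ (∑ i ∈ s, w i) = ∑ i ∈ s, vv ⬝ᵥ w i := by
  classical
  induction s using Finset.induction with
  | empty => simp
  | insert _ _ h ih => rw [Finset.sum_insert h, Finset.sum_insert h, dotProduct_add, ih]

lemma aux_mulVec_dot {κ : Type*} [Fintype κ] (A : Matrix ι κ ℝ) (w : κ → ℝ) (z : ι → ℝ) :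
    (A *ᵥ w) ⬝ᵥ z = w ⬝ᵥ (Aᵀ *ᵥ z) := by
  calc (A *ᵥ w) ⬝ᵥ z = z ⬝ᵥ (A *ᵥ w) := dotProduct_comm _ _
    _ = (z ᵥ* A) ⬝ᵥ w := Matrix.dotProduct_mulVec _ _ _
    _ = (Aᵀ *ᵥ z) ⬝ᵥ w := by rw [Matrix.mulVec_transpose]
    _ = w ⬝ᵥ (Aᵀ *ᵥ z) := dotProduct_comm _ _

lemma aux_dot_self_nonneg (z : ι → ℝ) : 0 ≤ z ⬝ᵥ z :=
  Finset.sum_nonneg fun i _ => mul_self_nonneg _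


set_option maxHeartbeats 2000000 in
/-- **bipartite consensus.** Consider `ẋ = -L(t) x` on `ℝ^{dn}` (coordinates
indexed by `Fin n × Fin d`) with piecewise-constant symmetric positive semidefinite generator.
Suppose there is a subsequence of switching times `t (k 0) = t 0 < t (k 1) < ⋯` with bounded
gaps and `q ∈ (0,1)` such that for every `l`: the null space of the integral-network Laplacian
over `[t (k l), t (k (l+1)))` equals the column space of `C (1ₙ ⊗ Ψ)`, where `Ψ ∈ ℝ^{d×m}` has
orthonormal columns and `C = diag(σ₁ I_d, …, σₙ I_d)` with `σᵢ ∈ {±1}`; and the `(m+1)`-st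
largest eigenvalue of `Φₗᵀ Φₗ` is at most `q`. Then every solution converges, with
`lim_{t→∞} x(t) = C (1ₙ ⊗ ((1/n) Ψ (1ₙᵀ ⊗ Ψᵀ) C x(t₀))) = (1/n) C (1ₙ⊗Ψ)(1ₙᵀ⊗Ψᵀ) C x(t₀)`. -/
theorem bipartite_consensus_switching
    (n d m : ℕ)
    (t : ℕ → ℝ) (ht0 : t 0 = 0) (htmono : StrictMono t)
    (htlim : Tendsto t atTop atTop)
    (L : ℝ → Matrix (Fin n × Fin d) (Fin n × Fin d) ℝ)
    (hLpsd : ∀ s : ℝ, 0 ≤ s → (L s).PosSemidef)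
    (hLpc : ∀ k : ℕ, ∀ s ∈ Set.Ico (t k) (t (k + 1)), L s = L (t k))
    (k : ℕ → ℕ) (hk0 : k 0 = 0) (hkmono : StrictMono k)
    (h : ℝ) (hgap : ∀ l : ℕ, t (k (l + 1)) - t (k l) ≤ h)
    (q : ℝ) (hq : q ∈ Set.Ioo (0 : ℝ) 1)
    (Ψ : Matrix (Fin d) (Fin m) ℝ) (hΨ : Ψᵀ * Ψ = 1)
    (σ : Fin n → ℝ) (hσ : ∀ i, σ i = 1 ∨ σ i = -1)
    (C : Matrix (Fin n × Fin d) (Fin n × Fin d) ℝ)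
    (hC : C = Matrix.diagonal fun p : Fin n × Fin d => σ p.1)
    (oneN : Matrix (Fin n) Unit ℝ) (honeN : oneN = Matrix.of fun _ _ => (1 : ℝ))
    (hker : ∀ l : ℕ,
      LinearMap.ker ((t (k (l + 1)) - t (k l))⁻¹ •
        ∑ i ∈ Finset.range (k (l + 1) - k l),
          (t (k l + i + 1) - t (k l + i)) • L (t (k l + i))).mulVecLin
      = LinearMap.range (C * (oneN ⊗ₖ Ψ)).mulVecLin)
    (Φl : ℕ → Matrix (Fin n × Fin d) (Fin n × Fin d) ℝ)
    (hΦl : ∀ l : ℕ, Φl l = ((List.ofFn fun i : Fin (k (l + 1) - k l) =>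
      NormedSpace.exp
        (-(t (k l + (i : ℕ) + 1) - t (k l + (i : ℕ))) • L (t (k l + (i : ℕ))))).reverse).prod)
    (hμ : ∀ l : ℕ, ∃ μ : Fin (n * d) → ℝ, Antitone μ ∧
      ((Φl l)ᵀ * Φl l).charpoly = (∏ i : Fin (n * d), (Polynomial.X - Polynomial.C (μ i))) ∧
      ∀ i : Fin (n * d), (i : ℕ) = m → μ i ≤ q) :
    ∀ x : ℝ → (Fin n × Fin d → ℝ),
      (∀ k' : ℕ, ∀ s ∈ Set.Icc (t k') (t (k' + 1)),
        x s = NormedSpace.exp (-(s - t k') • L (t k')) *ᵥ x (t k')) →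
      Tendsto x atTop
        (nhds ((n : ℝ)⁻¹ • ((C * ((oneN ⊗ₖ Ψ) * (oneNᵀ ⊗ₖ Ψᵀ)) * C) *ᵥ x 0))) := by
  intro x hx
  classical
  by_cases hemp : IsEmpty (Fin n × Fin d)
  · have hxc : ∀ s : ℝ, x s
        = ((n : ℝ)⁻¹ • ((C * ((oneN ⊗ₖ Ψ) * (oneNᵀ ⊗ₖ Ψᵀ)) * C) *ᵥ x 0)) := fun s =>
      funext fun p => hemp.elim p
    exact (tendsto_const_nhds (f := (atTop : Filter ℝ))).congr fun s => (hxc s).symm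
  have hne : Nonempty (Fin n × Fin d) := not_isEmpty_iff.mp hemp
  obtain ⟨p0⟩ := hne
  have hn0 : (n : ℝ) ≠ 0 := Nat.cast_ne_zero.mpr (Nat.pos_of_ne_zero
    (fun h0 => by subst h0; exact (Fin.elim0 p0.1))).ne'
  -- basic setup
  set G : Matrix (Fin n × Fin d) (Unit × Fin m) ℝ := oneN ⊗ₖ Ψ with hG
  set B : Matrix (Fin n × Fin d) (Unit × Fin m) ℝ := C * G with hB
  have hGT : Gᵀ = oneNᵀ ⊗ₖ Ψᵀ := (Matrix.kroneckerMap_transpose _ _ _).symm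
  have hCT : Cᵀ = C := by rw [hC]; exact Matrix.diagonal_transpose _
  have hCC : C * C = 1 := by
    rw [hC, Matrix.diagonal_mul_diagonal]
    have hone : (fun p : Fin n × Fin d => σ p.1 * σ p.1) = fun _ => (1 : ℝ) :=
      funext fun p => by rcases hσ p.1 with h1 | h1 <;> rw [h1] <;> norm_num
    rw [hone, Matrix.diagonal_one]
  have hBtB : Bᵀ * B = (n : ℝ) • (1 : Matrix (Unit × Fin m) (Unit × Fin m) ℝ) := by
    rw [hB, Matrix.transpose_mul, hCT, Matrix.mul_assoc, ← Matrix.mul_assoc C C G, hCC,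
      Matrix.one_mul, hGT, hG, ← Matrix.mul_kronecker_mul, hΨ]
    have h1 : oneNᵀ * oneN = (n : ℝ) • (1 : Matrix Unit Unit ℝ) := by
      ext i j
      rw [honeN]
      simp [Matrix.mul_apply, Matrix.one_apply]
    rw [h1, Matrix.smul_kronecker, Matrix.one_kronecker_one]
  have hBkill : ∀ w : (Unit × Fin m) → ℝ, B *ᵥ w = 0 → w = 0 := by
    intro w hw
    have h1 : Bᵀ *ᵥ (B *ᵥ w) = 0 := by rw [hw, Matrix.mulVec_zero]
    rw [Matrix.mulVec_mulVec, hBtB, Matrix.smul_mulVec, Matrix.one_mulVec] at h1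
    rcases smul_eq_zero.mp h1 with h2 | h2
    · exact absurd h2 hn0
    · exact h2
  have hBinj : Function.Injective B.mulVecLin := by
    rw [← LinearMap.ker_eq_bot, Submodule.eq_bot_iff]
    intro w hw
    exact hBkill w (by rwa [LinearMap.mem_ker, Matrix.mulVecLin_apply] at hw)
  set V : Submodule ℝ ((Fin n × Fin d) → ℝ) := LinearMap.range B.mulVecLin with hV
  have hVrank : Module.finrank ℝ V = m := by
    rw [hV, LinearMap.finrank_range_of_inj hBinj, Module.finrank_pi,
      Fintype.card_prod, Fintype.card_unit, Fintype.card_fin, one_mul]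
  -- the limit vector
  set v : (Fin n × Fin d) → ℝ :=
    (n : ℝ)⁻¹ • ((C * ((oneN ⊗ₖ Ψ) * (oneNᵀ ⊗ₖ Ψᵀ)) * C) *ᵥ x 0) with hv
  have hvBB : v = (n : ℝ)⁻¹ • ((B * Bᵀ) *ᵥ x 0) := by
    rw [hv]
    congr 2
    rw [hB, Matrix.transpose_mul, hCT, ← hGT, hG]
    simp only [Matrix.mul_assoc]
  have hvV : v ∈ V := by
    rw [hvBB]
    refine ⟨(n : ℝ)⁻¹ • (Bᵀ *ᵥ x 0), ?_⟩
    rw [Matrix.mulVecLin_apply, Matrix.mulVec_smul, Matrix.mulVec_mulVec]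
  have hBv : Bᵀ *ᵥ v = Bᵀ *ᵥ x 0 := by
    rw [hvBB, Matrix.mulVec_smul, Matrix.mulVec_mulVec, ← Matrix.mul_assoc, hBtB,
      Matrix.smul_mul, Matrix.one_mul, Matrix.smul_mulVec, smul_smul,
      inv_mul_cancel₀ hn0, one_smul]
  have horth0 : ∀ vv ∈ V, vv ⬝ᵥ (x 0 - v) = 0 := by
    rintro vv ⟨w, rfl⟩
    rw [Matrix.mulVecLin_apply, aux_mulVec_dot, Matrix.mulVec_sub, hBv, sub_self,
      dotProduct_zero]
  -- times are nonneg
  have htnn : ∀ j : ℕ, 0 ≤ t j := fun j => ht0 ▸ htmono.monotone (Nat.zero_le j)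
  have hLj : ∀ j : ℕ, (L (t j)).PosSemidef := fun j => hLpsd _ (htnn j)
  have hLsymm : ∀ j : ℕ, (L (t j))ᵀ = L (t j) := fun j => by
    rw [← Matrix.conjTranspose_eq_transpose_of_trivial]; exact (hLj j).1.eq
  -- L kills V
  have hLkill : ∀ (j : ℕ), ∀ vv ∈ V, L (t j) *ᵥ vv = 0 := by
    intro j vv hvv
    obtain ⟨l, hlj, hjl⟩ := aux_cover k hk0 hkmono j
    have hmem : ((t (k (l + 1)) - t (k l))⁻¹ •
        ∑ i ∈ Finset.range (k (l + 1) - k l),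
          (t (k l + i + 1) - t (k l + i)) • L (t (k l + i))) *ᵥ vv = 0 := by
      have h1 : vv ∈ LinearMap.ker ((t (k (l + 1)) - t (k l))⁻¹ •
          ∑ i ∈ Finset.range (k (l + 1) - k l),
            (t (k l + i + 1) - t (k l + i)) • L (t (k l + i))).mulVecLin := by
        rw [hker l]; exact hvv
      rwa [LinearMap.mem_ker, Matrix.mulVecLin_apply] at h1
    have hc : (0 : ℝ) < t (k (l + 1)) - t (k l) :=
      sub_pos.mpr (htmono (hkmono (lt_add_one l)))
    have hsum0 : (∑ i ∈ Finset.range (k (l + 1) - k l),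
        (t (k l + i + 1) - t (k l + i)) • L (t (k l + i))) *ᵥ vv = 0 := by
      rw [Matrix.smul_mulVec] at hmem
      rcases smul_eq_zero.mp hmem with h2 | h2
      · exact absurd h2 (inv_ne_zero hc.ne')
      · exact h2
    have hterm : ∀ i ∈ Finset.range (k (l + 1) - k l),
        (0:ℝ) ≤ vv ⬝ᵥ (((t (k l + i + 1) - t (k l + i)) • L (t (k l + i))) *ᵥ vv) := by
      intro i _
      rw [Matrix.smul_mulVec, dotProduct_smul, smul_eq_mul]
      have hτ : (0:ℝ) ≤ t (k l + i + 1) - t (k l + i) :=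
        (sub_pos.mpr (htmono (lt_add_one (k l + i)))).le
      have hpsd := (hLj (k l + i)).dotProduct_mulVec_nonneg vv
      rw [show star vv = vv from star_trivial vv] at hpsd
      exact mul_nonneg hτ hpsd
    have hzero : ∀ i ∈ Finset.range (k (l + 1) - k l),
        vv ⬝ᵥ (((t (k l + i + 1) - t (k l + i)) • L (t (k l + i))) *ᵥ vv) = 0 := by
      have hsumdot : ∑ i ∈ Finset.range (k (l + 1) - k l),
          vv ⬝ᵥ (((t (k l + i + 1) - t (k l + i)) • L (t (k l + i))) *ᵥ vv) = 0 := by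
        rw [← aux_dot_sum, ← aux_sum_mulVec, hsum0, dotProduct_zero]
      exact fun i hi => (Finset.sum_eq_zero_iff_of_nonneg hterm).mp hsumdot i hi
    have hji : j - k l ∈ Finset.range (k (l + 1) - k l) := Finset.mem_range.mpr (by omega)
    have h3 := hzero (j - k l) hji
    rw [Matrix.smul_mulVec, dotProduct_smul, smul_eq_mul] at h3
    have hτ : (0:ℝ) < t (k l + (j - k l) + 1) - t (k l + (j - k l)) :=
      sub_pos.mpr (htmono (lt_add_one _))
    have h4 : vv ⬝ᵥ (L (t (k l + (j - k l))) *ᵥ vv) = 0 := by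
      rcases mul_eq_zero.mp h3 with h5 | h5
      · exact absurd h5 hτ.ne'
      · exact h5
    have h6 := ((hLj (k l + (j - k l))).dotProduct_mulVec_zero_iff vv).mp
      (by rwa [show star vv = vv from star_trivial vv])
    rwa [show k l + (j - k l) = j by omega] at h6
  -- exp fixes V
  have hfix : ∀ (j : ℕ) (c : ℝ), ∀ vv ∈ V,
      NormedSpace.exp (c • L (t j)) *ᵥ vv = vv := by
    intro j c vv hvv
    have h1 := aux_exp_mulVec_eig (c • L (t j)) vv 0
      (by rw [Matrix.smul_mulVec, hLkill j vv hvv, smul_zero, zero_smul])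
    simpa using h1
  -- step dynamics at switching times
  have hstepj : ∀ j : ℕ, x (t (j + 1))
      = NormedSpace.exp (-(t (j + 1) - t j) • L (t j)) *ᵥ x (t j) := fun j =>
    hx j (t (j + 1)) ⟨(htmono (lt_add_one j)).le, le_refl _⟩
  -- product relation
  have hΦstep : ∀ l : ℕ, x (t (k (l + 1))) = Φl l *ᵥ x (t (k l)) := by
    intro l
    have hps := aux_prod_step (fun j => NormedSpace.exp (-(t (j + 1) - t j) • L (t j)))
      (fun j => x (t j)) (k l) (fun j => hstepj j) (k (l + 1) - k l)
    have hkk : k l + (k (l + 1) - k l) = k (l + 1) := by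
      have := (hkmono (lt_add_one l)).le; omega
    rw [hkk] at hps
    rw [hΦl l, ← hps]
  -- factors of Φl fix V and are symmetric
  have hfactor : ∀ (l : ℕ) (A : Matrix (Fin n × Fin d) (Fin n × Fin d) ℝ),
      A ∈ (List.ofFn fun i : Fin (k (l + 1) - k l) =>
        NormedSpace.exp
          (-(t (k l + (i : ℕ) + 1) - t (k l + (i : ℕ))) • L (t (k l + (i : ℕ))))) →
      (∀ vv ∈ V, A *ᵥ vv = vv) ∧ Aᵀ = A := by
    intro l A hA
    rw [List.mem_ofFn] at hA
    obtain ⟨i, rfl⟩ := hA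
    refine ⟨fun vv hvv => hfix _ _ vv hvv, ?_⟩
    rw [← Matrix.exp_transpose, Matrix.transpose_smul, hLsymm]
  have hΦfix : ∀ l : ℕ, ∀ vv ∈ V, Φl l *ᵥ vv = vv := by
    intro l vv hvv
    rw [hΦl l]
    apply aux_list_prod_fix
    intro A hA
    rw [List.mem_reverse] at hA
    exact (hfactor l A hA).1 vv hvv
  have hΦTfix : ∀ l : ℕ, ∀ vv ∈ V, (Φl l)ᵀ *ᵥ vv = vv := by
    intro l vv hvv
    rw [hΦl l]
    rw [show ((List.ofFn fun i : Fin (k (l + 1) - k l) =>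
        NormedSpace.exp
          (-(t (k l + (i : ℕ) + 1) - t (k l + (i : ℕ))) • L (t (k l + (i : ℕ))))).reverse)
      = ((List.ofFn fun i : Fin (k (l + 1) - k l) =>
        NormedSpace.exp
          (-(t (k l + (i : ℕ) + 1) - t (k l + (i : ℕ))) • L (t (k l + (i : ℕ))))).reverse) from rfl]
    apply aux_list_prod_transpose_fix
    · intro A hA; rw [List.mem_reverse] at hA; exact (hfactor l A hA).2
    · intro A hA; rw [List.mem_reverse] at hA; exact (hfactor l A hA).1 vv hvv
  -- quadratic bound per span
  have hQ : ∀ (l : ℕ) (e : (Fin n × Fin d) → ℝ), (∀ vv ∈ V, vv ⬝ᵥ e = 0) →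
      (Φl l *ᵥ e) ⬝ᵥ (Φl l *ᵥ e) ≤ q * (e ⬝ᵥ e) := by
    intro l e he
    obtain ⟨μ, hanti, hcp, hμm⟩ := hμ l
    have hSH : ((Φl l)ᵀ * Φl l).IsHermitian := Matrix.isHermitian_conjTranspose_mul_self _
    have hSV : ∀ vv ∈ V, ((Φl l)ᵀ * Φl l) *ᵥ vv = vv := by
      intro vv hvv
      rw [← Matrix.mulVec_mulVec, hΦfix l vv hvv, hΦTfix l vv hvv]
    have hcount := aux_eig_count ((Φl l)ᵀ * Φl l) hSH q m (n * d) μ hanti hcp hμm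
    have hbound := aux_quadratic_bound ((Φl l)ᵀ * Φl l) hSH q hq.2 m V hVrank hSV hcount e he
    calc (Φl l *ᵥ e) ⬝ᵥ (Φl l *ᵥ e) = e ⬝ᵥ (((Φl l)ᵀ * Φl l) *ᵥ e) := by
          rw [aux_mulVec_dot, Matrix.mulVec_mulVec]
      _ ≤ q * (e ⬝ᵥ e) := hbound
  -- main induction
  have hind : ∀ l : ℕ, (∀ vv ∈ V, vv ⬝ᵥ (x (t (k l)) - v) = 0) ∧
      (x (t (k l)) - v) ⬝ᵥ (x (t (k l)) - v)
        ≤ q ^ l * ((x 0 - v) ⬝ᵥ (x 0 - v)) := by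
    intro l
    induction l with
    | zero =>
      rw [hk0, ht0, pow_zero, one_mul]
      exact ⟨horth0, le_refl _⟩
    | succ l ih =>
      have hstepl : x (t (k (l + 1))) - v = Φl l *ᵥ (x (t (k l)) - v) := by
        rw [Matrix.mulVec_sub, hΦfix l v hvV, hΦstep l]
      constructor
      · intro vv hvv
        rw [hstepl, Matrix.dotProduct_mulVec, ← Matrix.mulVec_transpose,
          hΦTfix l vv hvv]
        exact ih.1 vv hvv
      · rw [hstepl]
        calc (Φl l *ᵥ (x (t (k l)) - v)) ⬝ᵥ (Φl l *ᵥ (x (t (k l)) - v))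
            ≤ q * ((x (t (k l)) - v) ⬝ᵥ (x (t (k l)) - v)) := hQ l _ ih.1
          _ ≤ q * (q ^ l * ((x 0 - v) ⬝ᵥ (x 0 - v))) :=
              mul_le_mul_of_nonneg_left ih.2 hq.1.le
          _ = q ^ (l + 1) * ((x 0 - v) ⬝ᵥ (x 0 - v)) := by ring
  -- within-span contraction
  have hmid : ∀ (l i : ℕ), k l + i ≤ k (l + 1) →
      (x (t (k l + i)) - v) ⬝ᵥ (x (t (k l + i)) - v)
        ≤ (x (t (k l)) - v) ⬝ᵥ (x (t (k l)) - v) := by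
    intro l i
    induction i with
    | zero => intro _; exact le_refl _
    | succ i ih =>
      intro hle
      have hle' : k l + i ≤ k (l + 1) := by omega
      have hstepi : x (t (k l + i + 1)) - v
          = NormedSpace.exp (-(t (k l + i + 1) - t (k l + i)) • L (t (k l + i)))
            *ᵥ (x (t (k l + i)) - v) := by
        rw [Matrix.mulVec_sub, hfix (k l + i) _ v hvV, hstepj (k l + i)]
      calc (x (t (k l + (i + 1))) - v) ⬝ᵥ (x (t (k l + (i + 1))) - v)
          = (x (t (k l + i + 1)) - v) ⬝ᵥ (x (t (k l + i + 1)) - v) := by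
            rw [show k l + (i + 1) = k l + i + 1 by omega]
        _ ≤ (x (t (k l + i)) - v) ⬝ᵥ (x (t (k l + i)) - v) := by
            rw [hstepi]
            exact aux_exp_contract _ (hLj (k l + i)) _
              (by have := (htmono (lt_add_one (k l + i))).le; linarith) _
        _ ≤ _ := ih hle'
  -- final convergence
  rw [tendsto_pi_nhds]
  intro p
  rw [Metric.tendsto_atTop]
  intro ε hε
  have hD0 : 0 ≤ (x 0 - v) ⬝ᵥ (x 0 - v) := aux_dot_self_nonneg _
  have hlim : Tendsto (fun l : ℕ => q ^ l * ((x 0 - v) ⬝ᵥ (x 0 - v))) atTop (nhds 0) := by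
    simpa using (tendsto_pow_atTop_nhds_zero_of_lt_one hq.1.le hq.2).mul_const
      ((x 0 - v) ⬝ᵥ (x 0 - v))
  have hε2 : (0:ℝ) < ε ^ 2 := by positivity
  obtain ⟨l0, hl0⟩ := (hlim.eventually (gt_mem_nhds hε2)).exists
  refine ⟨t (k l0), fun s hs => ?_⟩
  have hexj : ∃ j1, s < t j1 := (htlim.eventually (eventually_gt_atTop s)).exists
  have hj1 : s < t (Nat.find hexj) := Nat.find_spec hexj
  have hj1k : k l0 < Nat.find hexj := by
    by_contra hle
    push_neg at hle
    have : t (Nat.find hexj) ≤ t (k l0) := htmono.monotone hle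
    linarith
  set j : ℕ := Nat.find hexj - 1 with hjdef
  have hjs : t j ≤ s := by
    have hmin := Nat.find_min hexj (show j < Nat.find hexj by omega)
    push_neg at hmin
    exact hmin
  have hsj1 : s ≤ t (j + 1) := by
    rw [show j + 1 = Nat.find hexj by omega]
    exact hj1.le
  have hxs : x s = NormedSpace.exp (-(s - t j) • L (t j)) *ᵥ x (t j) :=
    hx j s ⟨hjs, hsj1⟩
  have hclef : (x s - v) ⬝ᵥ (x s - v) ≤ (x (t j) - v) ⬝ᵥ (x (t j) - v) := by
    have hxsv : x s - v = NormedSpace.exp (-(s - t j) • L (t j)) *ᵥ (x (t j) - v) := by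
      rw [Matrix.mulVec_sub, hfix j _ v hvV, hxs]
    rw [hxsv]
    exact aux_exp_contract _ (hLj j) _ (by linarith) _
  obtain ⟨l', hl'1, hl'2⟩ := aux_cover k hk0 hkmono j
  have hl0l' : l0 ≤ l' := by
    by_contra hlt
    push_neg at hlt
    have h1 : k (l' + 1) ≤ k l0 := hkmono.monotone (by omega)
    have h2 : k l0 ≤ j := by omega
    omega
  have hmid' := hmid l' (j - k l') (by omega)
  rw [show k l' + (j - k l') = j by omega] at hmid'
  have hchain : (x s - v) ⬝ᵥ (x s - v) ≤ q ^ l' * ((x 0 - v) ⬝ᵥ (x 0 - v)) :=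
    le_trans hclef (le_trans hmid' (hind l').2)
  have hql : q ^ l' ≤ q ^ l0 := pow_le_pow_of_le_one hq.1.le hq.2.le hl0l'
  have hfin : (x s - v) ⬝ᵥ (x s - v) < ε ^ 2 :=
    lt_of_le_of_lt (le_trans hchain (mul_le_mul_of_nonneg_right hql hD0)) hl0
  have hcoord : (x s p - v p) ^ 2 ≤ (x s - v) ⬝ᵥ (x s - v) := by
    have h1 : (x s - v) ⬝ᵥ (x s - v) = ∑ r, ((x s - v) r) * ((x s - v) r) := rfl
    rw [h1]
    have h2 : (x s p - v p) ^ 2 = ((x s - v) p) * ((x s - v) p) := by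
      simp [Pi.sub_apply]; ring
    rw [h2]
    exact Finset.single_le_sum (f := fun r => ((x s - v) r) * ((x s - v) r))
      (fun r _ => mul_self_nonneg _) (Finset.mem_univ p)
  rw [Real.dist_eq]
  nlinarith [abs_nonneg (x s p - v p), sq_abs (x s p - v p), hε]
end
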